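/- arXiv:1510.06630 — 3 statements merged into one kernel-verified Lean document; each statement's English description precedes it below -/
import Mathlib

section
/- Let (X, ρ, μ) be a compact metric measure space where μ is an Ahlfors t-regular Borel probability measure, let (r_n) be a decreasing sequence of positive reals tending to zero with ∑_{n=1}^∞ r_n^t = ∞, and let x_n be i.i.d. random points distributed according to μ. Then almost surely μ(limsup_{n→∞} B(x_n, r_n)) = 1. -/
open MeasureTheory ProbabilityTheory Filter Metric Set
open scoped ENNReal

lemma aux_tsum_ofReal_eq_top {f : ℕ → ℝ} (hf : ∀ n, 0 ≤ f n) (h : ¬ Summable f) :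
    ∑' n, ENNReal.ofReal (f n) = ∞ := by
  by_contra hne
  apply h
  have := ENNReal.summable_toReal hne
  simpa only [ENNReal.toReal_ofReal (hf _)] using this

lemma aux_iIndepSet {X Ω : Type*} [MeasurableSpace X] [MeasurableSpace Ω]
    {P : Measure Ω} {x : ℕ → Ω → X}
    (hindep : iIndepFun (m := fun _ => ‹MeasurableSpace X›) x P)
    {B : ℕ → Set X} (hB : ∀ n, MeasurableSet (B n)) :
    iIndepSet (fun n => x n ⁻¹' B n) P := by
  rw [ProbabilityTheory.iIndepSet_iff]
  intro S f hf
  refine hindep.iIndep.meas_biInter fun i hi => ?_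
  have hle : MeasurableSpace.generateFrom {x i ⁻¹' B i} ≤
      MeasurableSpace.comap (x i) ‹MeasurableSpace X› := by
    refine MeasurableSpace.generateFrom_le ?_
    rintro s rfl
    exact ⟨B i, hB i, rfl⟩
  exact hle _ (hf i hi)

/-- Let `(X, ρ, μ)` be a compact metric measure space with `μ` an Ahlfors `t`-regular Borel
probability measure, `(r n)` a decreasing sequence of positive reals tending to zero with
`∑ (r n) ^ t = ∞`, and `x n` i.i.d. random points with law `μ`.  Then almost surely the random
covering set `E(x) = limsupₙ B(xₙ, rₙ)` has full `μ`-measure. -/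
theorem covering_set_full_of_not_summable
    {X : Type*} [MetricSpace X] [CompactSpace X] [MeasurableSpace X] [BorelSpace X]
    (μ : Measure X) [IsProbabilityMeasure μ] (t C : ℝ) (ht : 0 < t) (hC : 1 ≤ C)
    (hreg : ∀ (x : X) (ρ : ℝ), 0 < ρ → ρ < Metric.diam (Set.univ : Set X) →
      ENNReal.ofReal (C⁻¹ * ρ ^ t) ≤ μ (closedBall x ρ) ∧
      μ (closedBall x ρ) ≤ ENNReal.ofReal (C * ρ ^ t))
    (r : ℕ → ℝ) (hrpos : ∀ n, 0 < r n) (hrmono : Antitone r)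
    (hrlim : Tendsto r atTop (nhds 0))
    (hsum : ¬ Summable fun n => r n ^ t)
    {Ω : Type*} [MeasurableSpace Ω] (P : Measure Ω) [IsProbabilityMeasure P]
    (x : ℕ → Ω → X) (hmeas : ∀ n, Measurable (x n))
    (hindep : iIndepFun (m := fun _ => ‹MeasurableSpace X›) x P)
    (hlaw : ∀ n, Measure.map (x n) P = μ) :
    ∀ᵐ ω ∂P, μ (⋂ k : ℕ, ⋃ n : ℕ, ⋃ _ : k ≤ n, closedBall (x n ω) (r n)) = 1 := by
  -- trivial case: X has at most one point
  rcases subsingleton_or_nontrivial X with hX | hX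
  · refine ae_of_all _ fun ω => ?_
    have huniv : (⋂ k : ℕ, ⋃ n : ℕ, ⋃ _ : k ≤ n, closedBall (x n ω) (r n)) = univ := by
      refine eq_univ_of_forall fun y => ?_
      simp only [mem_iInter, mem_iUnion]
      intro k
      refine ⟨k, le_refl k, ?_⟩
      simp [mem_closedBall, Subsingleton.elim y (x k ω), (hrpos k).le]
    rw [huniv, measure_univ]
  -- the diameter is positive
  have hdiam : 0 < Metric.diam (univ : Set X) := by
    obtain ⟨a, b, hab⟩ := exists_pair_ne X
    have h1 : 0 < dist a b := dist_pos.2 hab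
    exact h1.trans_le (Metric.dist_le_diam_of_mem isCompact_univ.isBounded
      (mem_univ a) (mem_univ b))
  -- eventually r n < diam
  obtain ⟨N, hN⟩ := (eventually_atTop.1 (hrlim.eventually_lt_const hdiam))
  -- for each fixed y, the second Borel-Cantelli lemma
  have key : ∀ y : X,
      P (⋂ k : ℕ, ⋃ n : ℕ, ⋃ _ : k ≤ n, x n ⁻¹' closedBall y (r n)) = 1 := by
    intro y
    have hsm : ∀ n, MeasurableSet (x n ⁻¹' closedBall y (r n)) :=
      fun n => (hmeas n) measurableSet_closedBall
    have hPA : ∀ n, P (x n ⁻¹' closedBall y (r n)) = μ (closedBall y (r n)) := by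
      intro n
      rw [← hlaw n, Measure.map_apply (hmeas n) measurableSet_closedBall]
    have htop : ∑' n, P (x n ⁻¹' closedBall y (r n)) = ∞ := by
      simp only [hPA]
      refine top_le_iff.1 ?_
      calc (∞ : ℝ≥0∞) = ∑' n, ENNReal.ofReal (C⁻¹ * r (n + N) ^ t) := by
            refine (aux_tsum_ofReal_eq_top (fun n => ?_) ?_).symm
            · have h1 := hrpos (n + N)
              have h2 : (0:ℝ) < C := lt_of_lt_of_le one_pos hC
              positivity
            · intro hcon
              have h2 : (0:ℝ) < C := lt_of_lt_of_le one_pos hC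
              have hCne : C⁻¹ ≠ 0 := inv_ne_zero h2.ne'
              have h1 : Summable fun n => r (n + N) ^ t :=
                (summable_mul_left_iff hCne).1 hcon
              exact hsum ((summable_nat_add_iff N).1 h1)
        _ ≤ ∑' n, μ (closedBall y (r (n + N))) := by
            refine ENNReal.tsum_le_tsum fun n => ?_
            exact (hreg y (r (n + N)) (hrpos _) (hN _ (Nat.le_add_left N n))).1
        _ ≤ ∑' n, μ (closedBall y (r n)) :=
            ENNReal.tsum_comp_le_tsum_of_injective (add_left_injective N) _
    have hBC := ProbabilityTheory.measure_limsup_eq_one hsm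
      (aux_iIndepSet hindep (fun n => measurableSet_closedBall)) htop
    rw [limsup_eq_iInf_iSup_of_nat] at hBC
    simpa only [iInf_eq_iInter, iSup_eq_iUnion] using hBC
  -- Fubini
  set T : Set (Ω × X) :=
    ⋂ k : ℕ, ⋃ n : ℕ, ⋃ _ : k ≤ n, {p : Ω × X | dist p.2 (x n p.1) ≤ r n} with hT_def
  have hT : MeasurableSet T := by
    refine MeasurableSet.iInter fun k => MeasurableSet.iUnion fun n =>
      MeasurableSet.iUnion fun _ => ?_
    exact measurableSet_le (measurable_snd.dist ((hmeas n).comp measurable_fst))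
      measurable_const
  have hslice_ω : ∀ ω : Ω, Prod.mk ω ⁻¹' T =
      ⋂ k : ℕ, ⋃ n : ℕ, ⋃ _ : k ≤ n, closedBall (x n ω) (r n) := by
    intro ω
    ext y
    simp [hT_def, mem_closedBall]
  have hslice_y : ∀ y : X, (fun ω => (ω, y)) ⁻¹' T =
      ⋂ k : ℕ, ⋃ n : ℕ, ⋃ _ : k ≤ n, x n ⁻¹' closedBall y (r n) := by
    intro y
    ext ω
    simp [hT_def, mem_closedBall, dist_comm]
  have hprod : (P.prod μ) T = 1 := by
    rw [Measure.prod_apply_symm hT]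
    have : ∀ y : X, P ((fun ω => (ω, y)) ⁻¹' T) = 1 := by
      intro y; rw [hslice_y y]; exact key y
    simp only [this]
    simp
  have hint : ∫⁻ ω, μ (Prod.mk ω ⁻¹' T) ∂P = 1 := by
    rw [← Measure.prod_apply hT, hprod]
  have hfm : Measurable fun ω => μ (Prod.mk ω ⁻¹' T) :=
    measurable_measure_prodMk_left hT
  have hle1 : ∀ ω, μ (Prod.mk ω ⁻¹' T) ≤ 1 := fun ω => prob_le_one
  have hzero : ∫⁻ ω, (1 - μ (Prod.mk ω ⁻¹' T)) ∂P = 0 := by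
    rw [lintegral_sub hfm (by rw [hint]; exact ENNReal.one_ne_top) (ae_of_all _ hle1)]
    simp [hint]
  have hae := (lintegral_eq_zero_iff (measurable_const.sub hfm)).1 hzero
  filter_upwards [hae] with ω hω
  have h1 : (1 : ℝ≥0∞) ≤ μ (Prod.mk ω ⁻¹' T) := by
    have := hω
    simp only [Pi.zero_apply] at this
    exact tsub_eq_zero_iff_le.1 this
  have h2 := le_antisymm (hle1 ω) h1
  rw [hslice_ω ω] at h2
  exact h2
end

section
/- Let (X, ρ, μ) be a compact Ahlfors t-regular metric probability space, (r_n) decreasing to 0, and x_n i.i.d. with law μ. Suppose F ⊂ X is compact, and for every open set V with V ∩ F ≠ ∅ one has dim_B(V ∩ F) > t − α where α = min{t, limsup (log n)/(−log r_n)}, and suppose the technical condition (C) holds: there is an increasing sequence (k_i) of positive integers with k_{i+1}/k_i → 1 and (log₂ n_{k_i})/k_i → α, where n_k = #{n : 2^{−(k+1)} ≤ r_n < 2^{−k}}. Then almost surely, for every open set V with V ∩ F ≠ ∅, the open ball U(x_n, r_n) intersects V ∩ F for infinitely many n. -/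
open MeasureTheory ProbabilityTheory Filter Metric Set
open scoped ENNReal

/-- The least number of `ε`-balls needed to cover `F` (as an extended natural number). -/
noncomputable def coverNumber {X : Type*} [MetricSpace X] (F : Set X) (ε : ℝ) : ℕ∞ :=
  ⨅ (s : Finset X) (_ : F ⊆ ⋃ x ∈ s, Metric.ball x ε), (s.card : ℕ∞)

/-- The upper box-counting (Minkowski) dimension of `F`:
`limsup_{ε → 0⁺} log N(F, ε) / log (1/ε)`. -/
noncomputable def upperBoxDim {X : Type*} [MetricSpace X] (F : Set X) : ℝ≥0∞ :=
  Filter.limsup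
    (fun ε : ℝ => ENNReal.ofReal (Real.log ((coverNumber F ε).toNat) / Real.log (1 / ε)))
    (nhdsWithin 0 (Set.Ioi 0))

section Aux

variable {X : Type*} [MetricSpace X]

lemma coverNumber_le_card {E : Set X} {ε : ℝ} {s : Finset X} (h : E ⊆ ⋃ x ∈ s, ball x ε) :
    coverNumber E ε ≤ s.card := iInf₂_le s h

lemma coverNumber_anti (E : Set X) {ε ε' : ℝ} (h : ε ≤ ε') :
    coverNumber E ε' ≤ coverNumber E ε :=
  le_iInf₂ fun s hs => coverNumber_le_card
    (hs.trans (iUnion₂_mono fun _ _ => ball_subset_ball h))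

lemma coverNumber_lt_top [CompactSpace X] (E : Set X) {ε : ℝ} (hε : 0 < ε) :
    coverNumber E ε < ⊤ := by
  obtain ⟨s, hsfin, hscov⟩ := (Metric.totallyBounded_iff).1
    ((isCompact_univ.totallyBounded).subset (subset_univ E)) ε hε
  calc coverNumber E ε ≤ hsfin.toFinset.card :=
        coverNumber_le_card (by simpa [hsfin.coe_toFinset] using hscov)
    _ < ⊤ := by exact_mod_cast WithTop.coe_lt_top _

lemma enat_toNat_le {a : ℕ∞} {m : ℕ} (h : a ≤ m) : a.toNat ≤ m := by
  lift a to ℕ using (h.trans_lt (WithTop.coe_lt_top m)).ne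
  exact_mod_cast h

/-- A maximal `ρ`-separated finite subset of `E`. -/
lemma exists_maximal_separated [CompactSpace X] (E : Set X) {ρ : ℝ} (hρ : 0 < ρ) :
    ∃ Y : Finset X, ↑Y ⊆ E ∧ ((Y : Set X).Pairwise fun a b => ρ ≤ dist a b) ∧
      E ⊆ ⋃ y ∈ Y, ball y ρ := by
  set 𝒮 : Set (Set X) := {Z | Z ⊆ E ∧ Z.Pairwise fun a b => ρ ≤ dist a b} with h𝒮
  obtain ⟨Z, hZmax⟩ : ∃ Z, Maximal (· ∈ 𝒮) Z := by
    refine zorn_subset 𝒮 fun c hc hchain => ⟨⋃₀ c, ⟨?_, ?_⟩, fun s hs => subset_sUnion_of_mem hs⟩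
    · exact sUnion_subset fun Z hZ => (hc hZ).1
    · intro a ha b hb hab
      obtain ⟨Za, hZa, haZ⟩ := ha
      obtain ⟨Zb, hZb, hbZ⟩ := hb
      rcases hchain.total hZa hZb with h | h
      · exact (hc hZb).2 (h haZ) hbZ hab
      · exact (hc hZa).2 haZ (h hbZ) hab
  have hZE : Z ⊆ E := hZmax.1.1
  have hZsep : Z.Pairwise fun a b => ρ ≤ dist a b := hZmax.1.2
  obtain ⟨s, hsfin, hscov⟩ := (Metric.totallyBounded_iff).1
    ((isCompact_univ.totallyBounded).subset (subset_univ E)) (ρ/3) (by linarith)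
  have hZfin : Z.Finite := by
    have hf : ∀ z ∈ Z, ∃ y ∈ s, z ∈ ball y (ρ/3) := by
      intro z hz
      simpa using hscov (hZE hz)
    choose f hfs hfb using hf
    haveI : Finite s := hsfin.to_subtype
    have hinj : Function.Injective (fun z : Z => (⟨f z z.2, hfs z z.2⟩ : s)) := by
      intro a b hab
      have hab' : f a a.2 = f b b.2 := congrArg Subtype.val hab
      by_contra hne
      have hne' : (a : X) ≠ (b : X) := fun h => hne (Subtype.ext h)
      have h1 := hfb a a.2
      have h2 := hfb b b.2
      rw [hab'] at h1
      rw [mem_ball] at h1 h2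
      have hd : dist (a : X) (b : X) < ρ := by
        calc dist (a : X) (b : X) ≤ dist (a : X) (f b b.2) + dist (b : X) (f b b.2) :=
              dist_triangle_right _ _ _
          _ < ρ/3 + ρ/3 := add_lt_add h1 h2
          _ < ρ := by linarith
      linarith [hZsep a.2 b.2 hne']
    exact Set.finite_coe_iff.1 (Finite.of_injective _ hinj)
  refine ⟨hZfin.toFinset, by simpa using hZE, by simpa using hZsep, ?_⟩
  intro e he
  simp only [Set.Finite.mem_toFinset, mem_iUnion, exists_prop]
  by_contra hcon
  push_neg at hcon
  have heZ : e ∉ Z := fun h => by simpa [hρ] using hcon e h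
  have hmem : insert e Z ∈ 𝒮 := by
    constructor
    · exact insert_subset he hZE
    · intro a ha b hb hab
      rcases ha with rfl | ha
      · rcases hb with rfl | hb
        · exact absurd rfl hab
        · have := hcon b hb
          rw [mem_ball] at this
          push_neg at this
          simpa [dist_comm] using this
      · rcases hb with rfl | hb
        · have := hcon a ha
          rw [mem_ball] at this
          push_neg at this
          simpa [dist_comm] using this
        · exact hZsep ha hb hab
  have := hZmax.2 hmem (subset_insert e Z)
  exact heZ (this (mem_insert e Z))

/-- Packing estimate: the measure of the `ρ`-thickening of `E` is at least the covering
number times the measure of a small ball. -/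
lemma coverNumber_mul_le_measure_thickening
    [CompactSpace X] [MeasurableSpace X] [BorelSpace X]
    (μ : Measure X) (t C : ℝ)
    (hlow : ∀ (x : X) (ρ : ℝ), 0 < ρ → ρ < Metric.diam (Set.univ : Set X) →
      ENNReal.ofReal (C⁻¹ * ρ ^ t) ≤ μ (closedBall x ρ))
    (E : Set X) {ρ : ℝ} (hρ : 0 < ρ) (hρd : ρ/4 < Metric.diam (Set.univ : Set X)) :
    ((coverNumber E ρ).toNat : ℝ≥0∞) * ENNReal.ofReal (C⁻¹ * (ρ/4) ^ t)
      ≤ μ (Metric.thickening ρ E) := by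
  obtain ⟨Y, hYE, hYsep, hYcov⟩ := exists_maximal_separated E hρ
  have hN : (coverNumber E ρ).toNat ≤ Y.card := enat_toNat_le (coverNumber_le_card hYcov)
  have hdisj : (↑Y : Set X).PairwiseDisjoint fun y => closedBall y (ρ/4) := by
    intro a ha b hb hab
    exact closedBall_disjoint_closedBall (by linarith [hYsep ha hb hab])
  have hsum : μ (⋃ y ∈ Y, closedBall y (ρ/4)) = ∑ y ∈ Y, μ (closedBall y (ρ/4)) :=
    measure_biUnion_finset hdisj fun y _ => measurableSet_closedBall
  have hsub : (⋃ y ∈ Y, closedBall y (ρ/4)) ⊆ Metric.thickening ρ E := by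
    refine iUnion₂_subset fun y hy z hz => ?_
    rw [Metric.mem_thickening_iff]
    exact ⟨y, hYE hy, lt_of_le_of_lt (mem_closedBall.1 hz) (by linarith)⟩
  calc ((coverNumber E ρ).toNat : ℝ≥0∞) * ENNReal.ofReal (C⁻¹ * (ρ/4) ^ t)
      ≤ (Y.card : ℝ≥0∞) * ENNReal.ofReal (C⁻¹ * (ρ/4) ^ t) :=
        mul_le_mul_left (by exact_mod_cast hN) _
    _ = Y.card • ENNReal.ofReal (C⁻¹ * (ρ/4) ^ t) := by rw [nsmul_eq_mul]
    _ ≤ ∑ _y ∈ Y, ENNReal.ofReal (C⁻¹ * (ρ/4) ^ t) := by rw [Finset.sum_const]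
    _ ≤ ∑ y ∈ Y, μ (closedBall y (ρ/4)) :=
        Finset.sum_le_sum fun y _ => hlow y (ρ/4) (by linarith) hρd
    _ = μ (⋃ y ∈ Y, closedBall y (ρ/4)) := hsum.symm
    _ ≤ μ (Metric.thickening ρ E) := measure_mono hsub

/-- In an Ahlfors-regular probability space, every set has upper box dimension at most `t`. -/
lemma upperBoxDim_le_ofReal
    [CompactSpace X] [MeasurableSpace X] [BorelSpace X]
    (μ : Measure X) [IsProbabilityMeasure μ] (t C : ℝ) (ht : 0 < t) (hC : 1 ≤ C)
    (hlow : ∀ (x : X) (ρ : ℝ), 0 < ρ → ρ < Metric.diam (Set.univ : Set X) →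
      ENNReal.ofReal (C⁻¹ * ρ ^ t) ≤ μ (closedBall x ρ))
    (hdiam : 0 < Metric.diam (Set.univ : Set X)) (E : Set X) :
    upperBoxDim E ≤ ENNReal.ofReal t := by
  have hC0 : (0:ℝ) < C := lt_of_lt_of_le one_pos hC
  set A : ℝ := Real.log C + t * Real.log 4 with hA
  have hA0 : 0 ≤ A := by
    have h1 : 0 ≤ Real.log C := Real.log_nonneg hC
    have h2 : 0 ≤ Real.log 4 := Real.log_nonneg (by norm_num)
    positivity
  set g : ℝ → ℝ≥0∞ := fun ε => ENNReal.ofReal (A / Real.log (1/ε) + t) with hg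
  have hglim : Tendsto g (nhdsWithin 0 (Set.Ioi 0)) (nhds (ENNReal.ofReal t)) := by
    have h1 : Tendsto (fun ε : ℝ => 1/ε) (nhdsWithin 0 (Set.Ioi 0)) atTop := by
      simpa [one_div] using tendsto_inv_nhdsGT_zero
    have h2 : Tendsto (fun ε : ℝ => Real.log (1/ε)) (nhdsWithin 0 (Set.Ioi 0)) atTop :=
      Real.tendsto_log_atTop.comp h1
    have h3 : Tendsto (fun ε : ℝ => A / Real.log (1/ε) + t) (nhdsWithin 0 (Set.Ioi 0))
        (nhds (0 + t)) := (h2.const_div_atTop A).add tendsto_const_nhds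
    rw [zero_add] at h3
    exact (ENNReal.continuous_ofReal.tendsto t).comp h3
  have hev : ∀ᶠ ε in nhdsWithin (0:ℝ) (Set.Ioi 0),
      ENNReal.ofReal (Real.log ((coverNumber E ε).toNat) / Real.log (1 / ε)) ≤ g ε := by
    filter_upwards [Ioo_mem_nhdsGT_of_mem
      (Set.left_mem_Ico.2 (lt_min one_pos
        (by linarith : (0:ℝ) < 4 * Metric.diam (Set.univ : Set X))))] with ε hε
    obtain ⟨hε0, hεm⟩ := hε
    have hε1 : ε < 1 := lt_of_lt_of_le hεm (min_le_left _ _)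
    have hεd : ε / 4 < Metric.diam (Set.univ : Set X) := by
      have := lt_of_lt_of_le hεm (min_le_right _ _)
      linarith
    have hlog : 0 < Real.log (1/ε) := Real.log_pos (one_lt_one_div hε0 hε1)
    set N : ℕ := (coverNumber E ε).toNat with hN
    have hpack := (coverNumber_mul_le_measure_thickening μ t C hlow E hε0 hεd).trans
      (prob_le_one (μ := μ))
    have hreal : (N : ℝ) * (C⁻¹ * (ε/4) ^ t) ≤ 1 := by
      rw [← ENNReal.ofReal_natCast, ← ENNReal.ofReal_mul (by positivity)] at hpack
      exact ENNReal.ofReal_le_one.1 hpack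
    have hb0 : (0:ℝ) < C⁻¹ * (ε/4) ^ t := by positivity
    have hNle : (N : ℝ) ≤ C * ((ε/4) ^ t)⁻¹ := by
      rw [← le_div_iff₀ hb0] at hreal
      calc (N:ℝ) ≤ 1 / (C⁻¹ * (ε/4) ^ t) := hreal
        _ = C * ((ε/4) ^ t)⁻¹ := by field_simp
    have hRHS : Real.log (C * ((ε/4) ^ t)⁻¹) = A + t * Real.log (1/ε) := by
      rw [Real.log_mul (ne_of_gt hC0) (by positivity), Real.log_inv,
        Real.log_rpow (by positivity), hA]
      have : Real.log (ε/4) = Real.log ε - Real.log 4 :=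
        Real.log_div (ne_of_gt hε0) (by norm_num)
      rw [this, one_div, Real.log_inv]
      ring
    have hlogN : Real.log N ≤ A + t * Real.log (1/ε) := by
      rcases Nat.eq_zero_or_pos N with h0 | hpos
      · rw [h0]
        simp only [Nat.cast_zero, Real.log_zero]
        have : 0 ≤ t * Real.log (1/ε) := by positivity
        linarith
      · calc Real.log N ≤ Real.log (C * ((ε/4) ^ t)⁻¹) :=
              Real.log_le_log (by exact_mod_cast hpos) hNle
          _ = A + t * Real.log (1/ε) := hRHS
    rw [hg]
    apply ENNReal.ofReal_le_ofReal
    rw [div_le_iff₀ hlog]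
    calc Real.log N ≤ A + t * Real.log (1/ε) := hlogN
      _ = (A / Real.log (1/ε) + t) * Real.log (1/ε) := by field_simp
  calc upperBoxDim E ≤ Filter.limsup g (nhdsWithin 0 (Set.Ioi 0)) :=
        Filter.limsup_le_limsup hev
    _ = ENNReal.ofReal t := hglim.limsup_eq

end Aux

lemma iIndep_mono' {Ω ι : Type*} {mΩ : MeasurableSpace Ω} {μ : Measure Ω}
    {m m' : ι → MeasurableSpace Ω} (h : iIndep m μ) (hle : ∀ i, m' i ≤ m i) :
    iIndep m' μ := by
  rw [iIndep_iff] at h ⊢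
  intro s f hf
  exact h s fun i hi => hle i _ (hf i hi)

lemma iIndepFun_preimage {Ω X : Type*} {mΩ : MeasurableSpace Ω} [mX : MeasurableSpace X]
    {μ : Measure Ω} {x : ℕ → Ω → X} (hindep : iIndepFun x μ)
    (T : ℕ → Set X) (hT : ∀ n, MeasurableSet (T n)) :
    iIndepSet (fun n => x n ⁻¹' T n) μ := by
  rw [iIndepSet_iff_iIndep]
  refine iIndep_mono' hindep.iIndep fun i => ?_
  refine MeasurableSpace.generateFrom_le ?_
  rintro _ rfl
  exact ⟨T i, hT i, rfl⟩

set_option maxHeartbeats 1000000 in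
/-- Key divergence estimate. -/
lemma tsum_measure_thickening_eq_top
    {X : Type*} [MetricSpace X] [CompactSpace X] [MeasurableSpace X] [BorelSpace X]
    (μ : Measure X) [IsProbabilityMeasure μ] (t C : ℝ) (ht : 0 < t) (hC : 1 ≤ C)
    (hdiam : 0 < Metric.diam (Set.univ : Set X))
    (hlow : ∀ (x : X) (ρ : ℝ), 0 < ρ → ρ < Metric.diam (Set.univ : Set X) →
      ENNReal.ofReal (C⁻¹ * ρ ^ t) ≤ μ (closedBall x ρ))
    (r : ℕ → ℝ) (hrpos : ∀ n, 0 < r n) (hrlim : Tendsto r atTop (nhds 0))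
    (α : ℝ) (hα0 : 0 < α) (hαt : α ≤ t)
    (k : ℕ → ℕ) (hk : StrictMono k) (hkpos : ∀ i, 0 < k i)
    (hkratio : Tendsto (fun i => (k (i + 1) : ℝ) / (k i : ℝ)) atTop (nhds 1))
    (hkcount : Tendsto
      (fun i => Real.logb 2
          ((Set.ncard {n : ℕ | ((2:ℝ) ^ (k i + 1))⁻¹ ≤ r n ∧ r n < ((2:ℝ) ^ (k i))⁻¹} : ℝ))
        / (k i : ℝ)) atTop (nhds α))
    (E : Set X)
    (hdimE : ENNReal.ofReal (t - α) < upperBoxDim E) :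
    (∑' n, μ (Metric.thickening (r n) E)) = ∞ := by
  -- extract the exponent `s`
  obtain ⟨c, hc1, hc2⟩ := exists_between hdimE
  have hcne : c ≠ ⊤ := hc2.ne_top
  set s : ℝ := c.toReal with hsdef
  have hofs : ENNReal.ofReal s = c := ENNReal.ofReal_toReal hcne
  have hts : t - α < s :=
    (ENNReal.ofReal_lt_ofReal_iff_of_nonneg (sub_nonneg.2 hαt)).1 (by rw [hofs]; exact hc1)
  have hs0 : 0 < s := lt_of_le_of_lt (sub_nonneg.2 hαt) hts
  set η : ℝ := α + s - t with hηdef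
  have hη : 0 < η := by simp only [hηdef]; linarith
  set δ : ℝ := min (α/2) (η/(4*(1+s))) with hδdef
  have hδ0 : 0 < δ := lt_min (by linarith) (by positivity)
  have hδα : δ < α := lt_of_le_of_lt (min_le_left _ _) (by linarith)
  have hδs : δ * (1+s) ≤ η/4 := by
    have h1 : δ ≤ η/(4*(1+s)) := min_le_right _ _
    have h2 : (0:ℝ) < 1 + s := by linarith
    calc δ * (1+s) ≤ η/(4*(1+s)) * (1+s) := by nlinarith
      _ = η/4 := by field_simp
  have hδ1 : (0:ℝ) < 1 + δ := by linarith
  -- exponent estimate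
  have hexp : η/2 ≤ α - δ + s/(1+δ) - t := by
    have h1 : s - s*δ ≤ s/(1+δ) := by
      rw [le_div_iff₀ hδ1]
      nlinarith [mul_nonneg (mul_nonneg hs0.le hδ0.le) hδ0.le]
    nlinarith
  -- notation
  set NN : ℕ → ℕ := fun K => (coverNumber E ((2:ℝ)^K)⁻¹).toNat with hNN
  set SS : ℕ → Set ℕ :=
    fun K => {n : ℕ | ((2:ℝ)^(K+1))⁻¹ ≤ r n ∧ r n < ((2:ℝ)^K)⁻¹} with hSS
  have hSfin : ∀ K, (SS K).Finite := by
    intro K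
    have hpos : (0:ℝ) < ((2:ℝ)^(K+1))⁻¹ := by positivity
    obtain ⟨M, hM⟩ := eventually_atTop.1 (hrlim.eventually_lt_const hpos)
    refine Set.Finite.subset (Set.finite_Iio M) fun n hn => ?_
    rw [Set.mem_Iio]
    by_contra h
    push_neg at h
    exact absurd hn.1 (not_le.2 (hM n h))
  -- good scales
  have hgood : ∀ j₀ : ℕ, ∃ j : ℕ, j₀ < j ∧
      (2:ℝ) ^ (s * (k (j-1) : ℝ)) ≤ (NN (k j) : ℝ) := by
    have hc2' : ENNReal.ofReal s < Filter.limsup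
        (fun ε : ℝ => ENNReal.ofReal (Real.log ((coverNumber E ε).toNat) / Real.log (1 / ε)))
        (nhdsWithin 0 (Set.Ioi 0)) := by
      rw [hofs]
      rw [upperBoxDim] at hc2
      exact hc2
    have hfreq := Filter.frequently_lt_of_lt_limsup (by isBoundedDefault) hc2'
    intro j₀
    have hm0 : (0:ℝ) < ((2:ℝ)^(k j₀))⁻¹ := by positivity
    obtain ⟨ε, hεP, hε0, hεlt⟩ :=
      (hfreq.and_eventually (Ioo_mem_nhdsGT_of_mem (Set.left_mem_Ico.2 hm0))).exists
    have hε1 : ε < 1 := by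
      have h1 : ((2:ℝ)^(k j₀))⁻¹ ≤ 1 := by
        rw [inv_le_one_iff₀]
        right
        exact one_le_pow₀ (by norm_num)
      linarith
    have hlog : 0 < Real.log (1/ε) := Real.log_pos (one_lt_one_div hε0 hε1)
    set Nε : ℕ := (coverNumber E ε).toNat with hNε
    have hsq : s < Real.log Nε / Real.log (1/ε) :=
      (ENNReal.ofReal_lt_ofReal_iff_of_nonneg hs0.le).1 hεP
    have hlogN : s * Real.log (1/ε) < Real.log Nε := by
      rw [lt_div_iff₀ hlog] at hsq
      linarith
    have hNε0 : 0 < Nε := by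
      rcases Nat.eq_zero_or_pos Nε with h0 | h
      · exfalso
        rw [h0] at hlogN
        simp only [Nat.cast_zero, Real.log_zero] at hlogN
        nlinarith [mul_pos hs0 hlog]
      · exact h
    have hNεge : (1/ε) ^ s < (Nε : ℝ) := by
      have he1 : (1/ε : ℝ) ^ s = Real.exp (Real.log (1/ε) * s) :=
        Real.rpow_def_of_pos (by positivity) s
      have he2 : Real.exp (Real.log (1/ε) * s) < Real.exp (Real.log Nε) :=
        Real.exp_lt_exp.2 (by rw [mul_comm]; exact hlogN)
      rw [he1]
      calc Real.exp (Real.log (1/ε) * s) < Real.exp (Real.log Nε) := he2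
        _ = (Nε : ℝ) := Real.exp_log (by exact_mod_cast hNε0)
    have hex : ∃ i, ((2:ℝ)^(k i))⁻¹ < ε := by
      obtain ⟨i, hi⟩ := pow_unbounded_of_one_lt (ε⁻¹) (by norm_num : (1:ℝ) < 2)
      refine ⟨i, inv_lt_of_inv_lt₀ hε0 ?_⟩
      calc ε⁻¹ < 2 ^ i := hi
        _ ≤ 2 ^ (k i) := pow_le_pow_right₀ (by norm_num) (hk.le_apply)
    set j := Nat.find hex with hj
    have hjspec : ((2:ℝ)^(k j))⁻¹ < ε := Nat.find_spec hex
    have hjgt : j₀ < j := by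
      by_contra h
      push_neg at h
      have : ((2:ℝ)^(k j₀))⁻¹ ≤ ((2:ℝ)^(k j))⁻¹ := by
        apply inv_anti₀ (by positivity)
        exact pow_le_pow_right₀ (by norm_num) (hk.monotone h)
      linarith
    have hj1 : 1 ≤ j := by omega
    have hjm : ε ≤ ((2:ℝ)^(k (j-1)))⁻¹ := by
      have := Nat.find_min hex (show j - 1 < j by omega)
      push_neg at this
      exact this
    refine ⟨j, hjgt, ?_⟩
    have hmono : coverNumber E ε ≤ coverNumber E ((2:ℝ)^(k j))⁻¹ :=
      coverNumber_anti E hjspec.le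
    have hfin : coverNumber E ((2:ℝ)^(k j))⁻¹ ≠ ⊤ :=
      (coverNumber_lt_top E (by positivity)).ne
    have hNle : Nε ≤ NN (k j) := ENat.toNat_le_toNat hmono hfin
    have hbase : ((2:ℝ)^(k (j-1)) : ℝ) ≤ 1/ε := by
      have hbb : (0:ℝ) < (2:ℝ)^(k (j-1)) := by positivity
      have h' : (2:ℝ)^(k (j-1)) * ε ≤ 1 := by
        calc (2:ℝ)^(k (j-1)) * ε ≤ (2:ℝ)^(k (j-1)) * ((2:ℝ)^(k (j-1)))⁻¹ :=
              mul_le_mul_of_nonneg_left hjm hbb.le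
          _ = 1 := mul_inv_cancel₀ (ne_of_gt hbb)
      exact (le_div_iff₀ hε0).2 h'
    have h2 : (2:ℝ) ^ (s * (k (j-1) : ℝ)) = ((2:ℝ)^(k (j-1)) : ℝ) ^ s := by
      rw [mul_comm, Real.rpow_mul (by norm_num), Real.rpow_natCast]
    calc (2:ℝ) ^ (s * (k (j-1) : ℝ)) = ((2:ℝ)^(k (j-1)) : ℝ) ^ s := h2
      _ ≤ (1/ε) ^ s := Real.rpow_le_rpow (by positivity) hbase hs0.le
      _ ≤ (Nε : ℝ) := hNεge.le
      _ ≤ (NN (k j) : ℝ) := by exact_mod_cast hNle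
  -- eventual bounds
  have hevratio : ∀ᶠ i in atTop, (k (i+1) : ℝ) ≤ (1+δ) * (k i : ℝ) := by
    filter_upwards [hkratio.eventually (eventually_le_nhds (by linarith : (1:ℝ) < 1 + δ))]
      with i hi
    have hki : (0:ℝ) < (k i : ℝ) := by exact_mod_cast hkpos i
    rw [div_le_iff₀ hki] at hi
    linarith
  have hevcount : ∀ᶠ j in atTop, (2:ℝ) ^ ((α - δ) * (k j : ℝ)) ≤ ((SS (k j)).ncard : ℝ) := by
    filter_upwards [hkcount.eventually (eventually_ge_nhds (by linarith : α - δ < α))]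
      with j hj
    have hkj : (0:ℝ) < (k j : ℝ) := by exact_mod_cast hkpos j
    have hj' : α - δ ≤ Real.logb 2 ((SS (k j)).ncard : ℝ) / (k j : ℝ) := hj
    have hlb : (α - δ) * (k j : ℝ) ≤ Real.logb 2 ((SS (k j)).ncard : ℝ) := by
      rw [le_div_iff₀ hkj] at hj'
      linarith
    have hm0 : 0 < (SS (k j)).ncard := by
      rcases Nat.eq_zero_or_pos ((SS (k j)).ncard) with h0 | h
      · exfalso
        rw [h0] at hlb
        simp only [Nat.cast_zero, Real.logb_zero] at hlb
        nlinarith [mul_pos (show (0:ℝ) < α - δ by linarith) hkj]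
      · exact h
    calc (2:ℝ) ^ ((α - δ) * (k j : ℝ)) ≤ (2:ℝ) ^ (Real.logb 2 ((SS (k j)).ncard : ℝ)) :=
          Real.rpow_le_rpow_of_exponent_le (by norm_num) hlb
      _ = ((SS (k j)).ncard : ℝ) :=
          Real.rpow_logb (by norm_num) (by norm_num) (by exact_mod_cast hm0)
  have hevdiam : ∀ᶠ j in atTop, ((2:ℝ)^(k j + 1))⁻¹ / 4 < Metric.diam (Set.univ : Set X) := by
    have htend : Tendsto (fun j : ℕ => ((2:ℝ)^(k j + 1))⁻¹) atTop (nhds 0) := by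
      apply squeeze_zero (fun j => by positivity) (g := fun j => (1/2 : ℝ) ^ j)
      · intro j
        rw [one_div, inv_pow]
        apply inv_anti₀ (by positivity)
        have hj : j ≤ k j := hk.le_apply
        exact pow_le_pow_right₀ (by norm_num) (by omega)
      · exact tendsto_pow_atTop_nhds_zero_of_lt_one (by norm_num) (by norm_num)
    filter_upwards [htend.eventually_lt_const (by linarith : (0:ℝ) < 4 * Metric.diam
      (Set.univ : Set X))] with j hj
    linarith
  -- suppose the sum converges
  by_contra hne
  set B : ℝ≥0∞ := ∑' n, μ (Metric.thickening (r n) E) with hB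
  have hevB : ∀ᶠ j in atTop,
      B < ENNReal.ofReal (C⁻¹ * (2:ℝ) ^ ((k j : ℝ) * (η/2) - 3*t)) := by
    have hC0 : (0:ℝ) < C := lt_of_lt_of_le one_pos hC
    have h1 : Tendsto (fun j : ℕ => (k j : ℝ)) atTop atTop :=
      tendsto_natCast_atTop_atTop.comp hk.tendsto_atTop
    have h2 : Tendsto (fun j : ℕ => (k j : ℝ) * (η/2) - 3*t) atTop atTop := by
      have := tendsto_atTop_add_const_right atTop (-(3*t))
        (h1.atTop_mul_const (show (0:ℝ) < η/2 by linarith))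
      simpa [sub_eq_add_neg] using this
    have h3 : Tendsto (fun j : ℕ => C⁻¹ * (2:ℝ) ^ ((k j : ℝ) * (η/2) - 3*t)) atTop atTop := by
      apply Tendsto.const_mul_atTop (by positivity)
      have : ∀ j : ℕ, (2:ℝ) ^ ((k j : ℝ) * (η/2) - 3*t)
          = Real.exp (Real.log 2 * ((k j : ℝ) * (η/2) - 3*t)) := fun j =>
        Real.rpow_def_of_pos (by norm_num) _
      simp only [this]
      exact Real.tendsto_exp_atTop.comp (h2.const_mul_atTop (Real.log_pos (by norm_num)))
    filter_upwards [h3.eventually_gt_atTop B.toReal] with j hj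
    calc B = ENNReal.ofReal B.toReal := (ENNReal.ofReal_toReal hne).symm
      _ < ENNReal.ofReal (C⁻¹ * (2:ℝ) ^ ((k j : ℝ) * (η/2) - 3*t)) :=
        (ENNReal.ofReal_lt_ofReal_iff (lt_of_le_of_lt ENNReal.toReal_nonneg hj)).2 hj
  -- collect thresholds
  obtain ⟨I₁, hI₁⟩ := eventually_atTop.1 hevratio
  obtain ⟨I₂, hI₂⟩ := eventually_atTop.1 hevcount
  obtain ⟨I₃, hI₃⟩ := eventually_atTop.1 hevdiam
  obtain ⟨I₄, hI₄⟩ := eventually_atTop.1 hevB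
  obtain ⟨j, hjgt, hjN⟩ := hgood (max (max I₁ I₂) (max I₃ I₄) + 1)
  have hjI₁ : I₁ ≤ j - 1 := by omega
  have hjI₂ : I₂ ≤ j := by omega
  have hjI₃ : I₃ ≤ j := by omega
  have hjI₄ : I₄ ≤ j := by omega
  have hj1 : 1 ≤ j := by omega
  set K : ℕ := k j with hK
  set κ : ℝ := (K : ℝ) with hκ
  have hκ0 : 0 < κ := by
    simp only [hκ, hK]
    exact_mod_cast hkpos j
  -- ratio bound: κ ≤ (1+δ) * k (j-1)
  have hratio : κ ≤ (1+δ) * (k (j-1) : ℝ) := by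
    have := hI₁ (j-1) hjI₁
    have hidx : j - 1 + 1 = j := by omega
    rw [hidx] at this
    exact this
  -- N bound
  have hNbound : (2:ℝ) ^ (s * κ / (1+δ)) ≤ (NN K : ℝ) := by
    refine le_trans (Real.rpow_le_rpow_of_exponent_le (by norm_num) ?_) hjN
    have hkj1 : (0:ℝ) < (k (j-1) : ℝ) := by exact_mod_cast hkpos (j-1)
    rw [div_le_iff₀ hδ1]
    calc s * κ ≤ s * ((1+δ) * (k (j-1) : ℝ)) := by nlinarith
      _ = s * (k (j-1) : ℝ) * (1+δ) := by ring
  -- the key real inequality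
  have hρpos : (0:ℝ) < ((2:ℝ)^(K + 1))⁻¹ := by positivity
  set ρ : ℝ := ((2:ℝ)^(K + 1))⁻¹ with hρ
  have hρ4 : ρ / 4 = (2:ℝ) ^ (-(κ + 3)) := by
    rw [hρ]
    have h4 : ((2:ℝ)^(K + 1))⁻¹ / 4 = ((2:ℝ)^(K + 3))⁻¹ := by
      rw [pow_add, pow_add]
      norm_num
      ring
    rw [h4, ← Real.rpow_natCast 2 (K + 3), ← Real.rpow_neg (by norm_num)]
    push_cast
    ring_nf
    rw [hκ]
  have hρ4t : (ρ/4) ^ t = (2:ℝ) ^ (-(κ + 3) * t) := by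
    rw [hρ4, ← Real.rpow_mul (by norm_num : (0:ℝ) ≤ 2)]
  have hreal : C⁻¹ * (2:ℝ) ^ (κ * (η/2) - 3*t)
      ≤ ((SS K).ncard : ℝ) * ((NN K : ℝ) * (C⁻¹ * (ρ/4) ^ t)) := by
    have hC0 : (0:ℝ) < C := lt_of_lt_of_le one_pos hC
    have hcard : (2:ℝ) ^ ((α - δ) * κ) ≤ ((SS K).ncard : ℝ) := hI₂ j hjI₂
    have hmain : C⁻¹ * (2:ℝ) ^ (κ * (η/2) - 3*t)
        ≤ (2:ℝ) ^ ((α - δ) * κ) * ((2:ℝ) ^ (s * κ / (1+δ)) * (C⁻¹ * (2:ℝ) ^ (-(κ + 3) * t))) := by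
      have hcollect : (2:ℝ) ^ ((α - δ) * κ) * ((2:ℝ) ^ (s * κ / (1+δ))
          * (C⁻¹ * (2:ℝ) ^ (-(κ + 3) * t)))
          = C⁻¹ * (2:ℝ) ^ ((α - δ) * κ + s * κ / (1+δ) + (-(κ + 3) * t)) := by
        rw [Real.rpow_add (by norm_num), Real.rpow_add (by norm_num)]
        ring
      rw [hcollect]
      have hexp2 : κ * (η/2) - 3*t ≤ (α - δ) * κ + s * κ / (1+δ) + (-(κ + 3) * t) := by
        have h1 : (α - δ) * κ + s * κ / (1+δ) + (-(κ + 3) * t)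
            = κ * (α - δ + s/(1+δ) - t) - 3*t := by
          field_simp
          ring
        rw [h1]
        have := mul_le_mul_of_nonneg_left hexp hκ0.le
        linarith
      exact mul_le_mul_of_nonneg_left
        (Real.rpow_le_rpow_of_exponent_le (by norm_num) hexp2) (by positivity)
    calc C⁻¹ * (2:ℝ) ^ (κ * (η/2) - 3*t)
        ≤ (2:ℝ) ^ ((α - δ) * κ) * ((2:ℝ) ^ (s * κ / (1+δ))
          * (C⁻¹ * (2:ℝ) ^ (-(κ + 3) * t))) := hmain
      _ ≤ ((SS K).ncard : ℝ) * ((NN K : ℝ) * (C⁻¹ * (ρ/4) ^ t)) := by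
          rw [hρ4t]
          have hb : (0:ℝ) ≤ C⁻¹ * (2:ℝ) ^ (-(κ + 3) * t) := by positivity
          apply mul_le_mul hcard (mul_le_mul hNbound le_rfl hb (by positivity))
            (by positivity) (by positivity)
  -- ENNReal chain
  have hchain : ENNReal.ofReal (C⁻¹ * (2:ℝ) ^ (κ * (η/2) - 3*t)) ≤ B := by
    have hρd : ρ / 4 < Metric.diam (Set.univ : Set X) := hI₃ j hjI₃
    have hball : ∀ n ∈ (hSfin K).toFinset,
        ENNReal.ofReal ((NN K : ℝ) * (C⁻¹ * (ρ/4) ^ t)) ≤ μ (Metric.thickening (r n) E) := by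
      intro n hn
      rw [Set.Finite.mem_toFinset] at hn
      have hrn : ρ ≤ r n := hn.1
      have hanti : (NN K : ℕ∞) ≤ coverNumber E ρ := by
        have h1 : coverNumber E ((2:ℝ)^K)⁻¹ ≤ coverNumber E ρ := by
          apply coverNumber_anti
          rw [hρ]
          apply inv_anti₀ (by positivity)
          exact pow_le_pow_right₀ (by norm_num) (by omega)
        refine le_trans ?_ h1
        rw [hNN]
        exact (ENat.coe_toNat_le_self _)
      have hNle : (NN K : ℝ≥0∞) ≤ ((coverNumber E ρ).toNat : ℝ≥0∞) := by
        have hfin : coverNumber E ρ ≠ ⊤ := (coverNumber_lt_top E hρpos).ne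
        have := ENat.toNat_le_toNat hanti hfin
        simp only [ENat.toNat_coe] at this
        exact_mod_cast this
      calc ENNReal.ofReal ((NN K : ℝ) * (C⁻¹ * (ρ/4) ^ t))
          = (NN K : ℝ≥0∞) * ENNReal.ofReal (C⁻¹ * (ρ/4) ^ t) := by
            rw [ENNReal.ofReal_mul (by positivity), ENNReal.ofReal_natCast]
        _ ≤ ((coverNumber E ρ).toNat : ℝ≥0∞) * ENNReal.ofReal (C⁻¹ * (ρ/4) ^ t) :=
            mul_le_mul_left hNle _
        _ ≤ μ (Metric.thickening ρ E) :=
            coverNumber_mul_le_measure_thickening μ t C hlow E hρpos hρd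
        _ ≤ μ (Metric.thickening (r n) E) :=
            measure_mono (Metric.thickening_mono hrn E)
    have hcardeq : (hSfin K).toFinset.card = (SS K).ncard :=
      (Set.ncard_eq_toFinset_card (SS K) (hSfin K)).symm
    calc ENNReal.ofReal (C⁻¹ * (2:ℝ) ^ (κ * (η/2) - 3*t))
        ≤ ENNReal.ofReal (((SS K).ncard : ℝ) * ((NN K : ℝ) * (C⁻¹ * (ρ/4) ^ t))) :=
          ENNReal.ofReal_le_ofReal hreal
      _ = ((SS K).ncard : ℝ≥0∞) * ENNReal.ofReal ((NN K : ℝ) * (C⁻¹ * (ρ/4) ^ t)) := by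
          rw [ENNReal.ofReal_mul (by positivity), ENNReal.ofReal_natCast]
      _ = (hSfin K).toFinset.card • ENNReal.ofReal ((NN K : ℝ) * (C⁻¹ * (ρ/4) ^ t)) := by
          rw [nsmul_eq_mul, hcardeq]
      _ ≤ ∑ n ∈ (hSfin K).toFinset, μ (Metric.thickening (r n) E) :=
          Finset.card_nsmul_le_sum _ _ _ hball
      _ ≤ B := ENNReal.sum_le_tsum _
  exact absurd hchain (not_le.2 (hI₄ j hjI₄))

/-- Let `(X, ρ, μ)` be a compact Ahlfors `t`-regular metric probability space, `(r n)`
decreasing to `0`, and `x n` i.i.d. with law `μ`.  Suppose `F ⊆ X` is compact and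
`dim_B (V ∩ F) > t - α` for every open `V` meeting `F`, where
`α = min {t, limsup (log n)/(-log r n)}`, and suppose condition (C) holds: there is an
increasing sequence `(k i)` of positive integers with `k (i+1) / k i → 1` and
`log₂ n_{k i} / k i → α`, where `n_k = #{n : 2^{-(k+1)} ≤ r n < 2^{-k}}`.  Then almost
surely, for every open `V` meeting `F`, the open ball `U(xₙ, rₙ)` intersects `V ∩ F` for
infinitely many `n`. -/
theorem covering_hits_infinitely_often
    {X : Type*} [MetricSpace X] [CompactSpace X] [MeasurableSpace X] [BorelSpace X]
    (μ : Measure X) [IsProbabilityMeasure μ] (t C : ℝ) (ht : 0 < t) (hC : 1 ≤ C)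
    (hreg : ∀ (x : X) (ρ : ℝ), 0 < ρ → ρ < Metric.diam (Set.univ : Set X) →
      ENNReal.ofReal (C⁻¹ * ρ ^ t) ≤ μ (closedBall x ρ) ∧
      μ (closedBall x ρ) ≤ ENNReal.ofReal (C * ρ ^ t))
    (r : ℕ → ℝ) (hrpos : ∀ n, 0 < r n) (hrmono : Antitone r)
    (hrlim : Tendsto r atTop (nhds 0))
    (α : ℝ)
    (hα : α = min t (Filter.limsup (fun n : ℕ => Real.log n / (- Real.log (r n))) atTop))
    (F : Set X) (hF : IsCompact F)
    (hdim : ∀ V : Set X, IsOpen V → (V ∩ F).Nonempty →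
      ENNReal.ofReal (t - α) < upperBoxDim (V ∩ F))
    (k : ℕ → ℕ) (hk : StrictMono k) (hkpos : ∀ i, 0 < k i)
    (hkratio : Tendsto (fun i => (k (i + 1) : ℝ) / (k i : ℝ)) atTop (nhds 1))
    (hkcount : Tendsto
      (fun i => Real.logb 2
          ((Set.ncard {n : ℕ | ((2:ℝ) ^ (k i + 1))⁻¹ ≤ r n ∧ r n < ((2:ℝ) ^ (k i))⁻¹} : ℝ))
        / (k i : ℝ)) atTop (nhds α))
    {Ω : Type*} [MeasurableSpace Ω] (P : Measure Ω) [IsProbabilityMeasure P]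
    (x : ℕ → Ω → X) (hmeas : ∀ n, Measurable (x n))
    (hindep : iIndepFun x P)
    (hlaw : ∀ n, Measure.map (x n) P = μ) :
    ∀ᵐ ω ∂P, ∀ V : Set X, IsOpen V → (V ∩ F).Nonempty →
      {n : ℕ | (Metric.ball (x n ω) (r n) ∩ (V ∩ F)).Nonempty}.Infinite := by
  by_cases hsub : ∃ a b : X, a ≠ b
  swap
  · -- degenerate case: `X` is a single point
    push_neg at hsub
    refine ae_of_all _ fun ω V hV hVF => ?_
    obtain ⟨z, hz⟩ := hVF
    have hall : ∀ n : ℕ, (Metric.ball (x n ω) (r n) ∩ (V ∩ F)).Nonempty := by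
      intro n
      refine ⟨z, ?_, hz⟩
      rw [mem_ball]
      have : x n ω = z := hsub _ _
      rw [this, dist_self]
      exact hrpos n
    have : {n : ℕ | (Metric.ball (x n ω) (r n) ∩ (V ∩ F)).Nonempty} = Set.univ :=
      Set.eq_univ_of_forall hall
    rw [this]
    exact Set.infinite_univ
  obtain ⟨a, b, hab⟩ := hsub
  have hdiam : 0 < Metric.diam (Set.univ : Set X) :=
    lt_of_lt_of_le (dist_pos.2 hab)
      (dist_le_diam_of_mem isCompact_univ.isBounded (mem_univ a) (mem_univ b))
  have hlow : ∀ (x : X) (ρ : ℝ), 0 < ρ → ρ < Metric.diam (Set.univ : Set X) →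
      ENNReal.ofReal (C⁻¹ * ρ ^ t) ≤ μ (closedBall x ρ) := fun x ρ h1 h2 => (hreg x ρ h1 h2).1
  have hα_nonneg : 0 ≤ α := by
    refine ge_of_tendsto' hkcount fun i => ?_
    have hki : (0:ℝ) ≤ (k i : ℝ) := Nat.cast_nonneg _
    refine div_nonneg ?_ hki
    rcases Nat.eq_zero_or_pos
        (Set.ncard {n : ℕ | ((2:ℝ) ^ (k i + 1))⁻¹ ≤ r n ∧ r n < ((2:ℝ) ^ (k i))⁻¹}) with h0 | h
    · rw [h0]
      simp
    · exact Real.logb_nonneg one_lt_two (by exact_mod_cast h)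
  have hαt : α ≤ t := by rw [hα]; exact min_le_left _ _
  set 𝒷 := TopologicalSpace.countableBasis X with h𝒷def
  have h𝒷 : TopologicalSpace.IsTopologicalBasis 𝒷 := TopologicalSpace.isBasis_countableBasis X
  have hcount : 𝒷.Countable := TopologicalSpace.countable_countableBasis X
  have key : ∀ b ∈ 𝒷, ∀ᵐ ω ∂P, (b ∩ F).Nonempty →
      {n : ℕ | (Metric.ball (x n ω) (r n) ∩ (b ∩ F)).Nonempty}.Infinite := by
    intro b hb
    by_cases hbF : (b ∩ F).Nonempty
    swap
    · exact ae_of_all _ fun ω h => absurd h hbF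
    have hdimE : ENNReal.ofReal (t - α) < upperBoxDim (b ∩ F) :=
      hdim b (h𝒷.isOpen hb) hbF
    have hα0 : 0 < α := by
      rcases hα_nonneg.lt_or_eq with h | h
      · exact h
      · exfalso
        have hle := upperBoxDim_le_ofReal μ t C ht hC hlow hdiam (b ∩ F)
        rw [← h, sub_zero] at hdimE
        exact absurd (lt_of_lt_of_le hdimE hle) (lt_irrefl _)
    have hdiv := tsum_measure_thickening_eq_top μ t C ht hC hdiam hlow r hrpos hrlim
      α hα0 hαt k hk hkpos hkratio hkcount (b ∩ F) hdimE
    set T : ℕ → Set X := fun n => Metric.thickening (r n) (b ∩ F) with hT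
    have hTmeas : ∀ n, MeasurableSet (T n) := fun n => Metric.isOpen_thickening.measurableSet
    set A : ℕ → Set Ω := fun n => x n ⁻¹' T n with hA
    have hAmeas : ∀ n, MeasurableSet (A n) := fun n => (hmeas n) (hTmeas n)
    have hAindep : iIndepSet A P := iIndepFun_preimage hindep T hTmeas
    have hAmeasure : ∀ n, P (A n) = μ (T n) := fun n => by
      rw [hA]
      rw [← Measure.map_apply (hmeas n) (hTmeas n), hlaw n]
    have hAsum : (∑' n, P (A n)) = ∞ := by
      simp only [hAmeasure]
      exact hdiv
    have hBC := ProbabilityTheory.measure_limsup_eq_one hAmeas hAindep hAsum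
    have hms : MeasurableSet (limsup A atTop) := by
      rw [limsup_eq_iInf_iSup_of_nat]
      simp only [iInf_eq_iInter, iSup_eq_iUnion]
      exact MeasurableSet.iInter fun n => MeasurableSet.iUnion fun i =>
        MeasurableSet.iUnion fun _ => hAmeas i
    have hae : ∀ᵐ ω ∂P, ω ∈ limsup A atTop := by
      rw [ae_iff]
      have hcompl : P (limsup A atTop)ᶜ = 0 := (prob_compl_eq_zero_iff hms).2 hBC
      simpa [Set.compl_def] using hcompl
    filter_upwards [hae] with ω hω _
    rw [mem_limsup_iff_frequently_mem] at hω
    have hinf := Nat.frequently_atTop_iff_infinite.1 hω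
    refine hinf.mono fun n hn => ?_
    have hn' : x n ω ∈ Metric.thickening (r n) (b ∩ F) := hn
    rw [Metric.mem_thickening_iff] at hn'
    obtain ⟨z, hzE, hd⟩ := hn'
    exact ⟨z, mem_ball'.2 hd, hzE⟩
  have hall := (ae_ball_iff hcount).2 key
  filter_upwards [hall] with ω hω V hV hVF
  obtain ⟨z, hzV, hzF⟩ := hVF
  obtain ⟨b, hb𝒷, hzb, hbV⟩ := h𝒷.exists_subset_of_mem_open hzV hV
  have hinf := hω b hb𝒷 ⟨z, hzb, hzF⟩
  refine hinf.mono fun n hn => ?_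
  obtain ⟨y, hy1, hy2, hy3⟩ := hn
  exact ⟨y, hy1, hbV hy2, hy3⟩
end

section
/- Let T be the boundary ∂T of a rooted tree whose vertices at level n correspond to the pieces Q ∈ 𝒬_n of a nested partition of a compact Ahlfors t-regular metric space X satisfying B(x_{n,i}, 2^{−n}) ⊂ Q_{n,i} ⊂ B(x_{n,i}, C·2^{−n}), equipped with the metric κ(v,u) = 2^{−min{i : v_i ≠ u_i}} (and κ(v,v) = 0). Let Π : ∂T → X be the canonical projection sending a path (Q_0 ⊃ Q_1 ⊃ ...) to the unique point of ⋂_n closure(Q_n). Then for every set E ⊂ X, the Hausdorff dimension of E in X equals the Hausdorff dimension of Π^{−1}(E) in (∂T, κ). -/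
open MeasureTheory Metric Set
open scoped ENNReal
open scoped Classical

private lemma tree_half_pow (k : ℕ) :
    ENNReal.ofReal (((2:ℝ)^k)⁻¹) = (1/2 : ℝ≥0∞)^k := by
  have h2 : ENNReal.ofReal 2 = 2 := by norm_num
  rw [ENNReal.ofReal_inv_of_pos (by positivity), ENNReal.ofReal_pow (by norm_num), h2,
    one_div, ENNReal.inv_pow]

/-- Bounded multiplicity: the number of pieces of `𝒬 k` whose closure meets a ball of radius
`2⁻ᵏ` is uniformly bounded. -/
private lemma tree_mult {X : Type*} [MetricSpace X] [CompactSpace X] [MeasurableSpace X]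
    [BorelSpace X]
    (μ : Measure X) [IsProbabilityMeasure μ] (t C : ℝ) (ht : 0 < t) (hC : 1 ≤ C)
    (hreg : ∀ (x : X) (ρ : ℝ), 0 < ρ → ρ < Metric.diam (Set.univ : Set X) →
      ENNReal.ofReal (C⁻¹ * ρ ^ t) ≤ μ (closedBall x ρ) ∧
      μ (closedBall x ρ) ≤ ENNReal.ofReal (C * ρ ^ t))
    (𝒬 : ℕ → Set (Set X))
    (hfin : ∀ n, (𝒬 n).Finite)
    (hdisj : ∀ n, (𝒬 n).Pairwise Disjoint)
    (hball : ∀ n, ∀ Q ∈ 𝒬 n, ∃ x : X,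
      Metric.closedBall x (((2:ℝ) ^ n)⁻¹) ⊆ Q ∧ Q ⊆ Metric.closedBall x (C * ((2:ℝ) ^ n)⁻¹)) :
    ∃ M : ℕ, 0 < M ∧ ∀ (k : ℕ) (a : X),
      (((hfin k).toFinset.filter
        (fun Q => (closure Q ∩ closedBall a (((2:ℝ)^k)⁻¹)).Nonempty)).card) ≤ M := by
  have hC0 : (0:ℝ) < C := lt_of_lt_of_le one_pos hC
  set D : ℝ := Metric.diam (Set.univ : Set X) with hD
  set KK : ℝ := max (C*C*(C+2)^t) (C*((C+2)/D)^t) with hKK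
  refine ⟨max 1 ⌈KK⌉₊, lt_of_lt_of_le one_pos (le_max_left _ _), ?_⟩
  intro k a
  set r : ℝ := ((2:ℝ)^k)⁻¹ with hrdef
  have hr : 0 < r := by positivity
  set S := (hfin k).toFinset.filter
      (fun Q => (closure Q ∩ closedBall a (((2:ℝ)^k)⁻¹)).Nonempty) with hS
  have hSmem : ∀ Q ∈ S, Q ∈ 𝒬 k ∧ (closure Q ∩ closedBall a r).Nonempty := by
    intro Q hQ
    rw [hS, Finset.mem_filter, Set.Finite.mem_toFinset] at hQ
    exact hQ
  by_cases hcase : r < D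
  swap
  · -- all pieces are `univ`
    have huniv : ∀ Q ∈ S, Q = Set.univ := by
      intro Q hQ
      obtain ⟨hQk, -⟩ := hSmem Q hQ
      obtain ⟨x, hx1, -⟩ := hball k Q hQk
      refine subset_antisymm (subset_univ _) (fun y _ => hx1 ?_)
      have : dist x y ≤ D := Metric.dist_le_diam_of_mem
        (isCompact_univ.isBounded) trivial trivial
      exact Metric.mem_closedBall'.mpr (this.trans (not_lt.mp hcase))
    have : S.card ≤ 1 := Finset.card_le_one.mpr
      (fun Q hQ R hR => (huniv Q hQ).trans (huniv R hR).symm)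
    exact this.trans (le_max_left _ _)
  · -- measure counting
    set f : Set X → X := fun Q =>
      if h : ∃ x : X, Metric.closedBall x (((2:ℝ)^k)⁻¹) ⊆ Q ∧
          Q ⊆ Metric.closedBall x (C * ((2:ℝ)^k)⁻¹) then h.choose else a with hf
    have hfQ : ∀ Q ∈ 𝒬 k, Metric.closedBall (f Q) r ⊆ Q ∧
        Q ⊆ Metric.closedBall (f Q) (C * r) := by
      intro Q hQ
      have h := hball k Q hQ
      simp only [hf, dif_pos h]
      exact h.choose_spec
    set c : ℝ≥0∞ := ENNReal.ofReal (C⁻¹ * r^t) with hc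
    have hc0 : c ≠ 0 := by
      simp only [hc, ne_eq, ENNReal.ofReal_eq_zero, not_le]
      positivity
    have hloc : ∀ Q ∈ S, Metric.closedBall (f Q) r ⊆ Metric.closedBall a ((C+2)*r) := by
      intro Q hQ
      obtain ⟨hQk, y, hy1, hy2⟩ := hSmem Q hQ
      intro z hz
      have hyQ : y ∈ Metric.closedBall (f Q) (C * r) :=
        closure_minimal (hfQ Q hQk).2 Metric.isClosed_closedBall hy1
      have hdza : dist z a ≤ dist z (f Q) + dist (f Q) y + dist y a := dist_triangle4 _ _ _ _
      have h1 : dist z (f Q) ≤ r := Metric.mem_closedBall.mp hz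
      have h2 : dist (f Q) y ≤ C * r := by
        rw [dist_comm]; exact Metric.mem_closedBall.mp hyQ
      have h3 : dist y a ≤ r := Metric.mem_closedBall.mp hy2
      have : dist z a ≤ (C+2)*r := by nlinarith
      exact Metric.mem_closedBall.mpr this
    have hpd : Set.PairwiseDisjoint (↑S) (fun Q => Metric.closedBall (f Q) r) := by
      intro Q hQ R hR hneq
      have hQk := (hSmem Q hQ).1
      have hRk := (hSmem R (by exact_mod_cast hR)).1
      exact (hdisj k hQk hRk hneq).mono (hfQ Q hQk).1 (hfQ R hRk).1
    have hmeasU : μ (⋃ Q ∈ S, Metric.closedBall (f Q) r)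
        = ∑ Q ∈ S, μ (Metric.closedBall (f Q) r) :=
      measure_biUnion_finset hpd (fun Q _ => measurableSet_closedBall)
    have hlow : (S.card : ℝ≥0∞) * c ≤ μ (⋃ Q ∈ S, Metric.closedBall (f Q) r) := by
      rw [hmeasU, ← nsmul_eq_mul]
      refine Finset.card_nsmul_le_sum S _ c (fun Q hQ => ?_)
      exact (hreg (f Q) r hr hcase).1
    have hup : μ (⋃ Q ∈ S, Metric.closedBall (f Q) r) ≤ μ (Metric.closedBall a ((C+2)*r)) :=
      measure_mono (Set.iUnion₂_subset hloc)
    have hbig : μ (Metric.closedBall a ((C+2)*r)) ≤ ENNReal.ofReal KK * c := by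
      by_cases h2 : (C+2)*r < D
      · have := (hreg a ((C+2)*r) (by positivity) h2).2
        refine this.trans ?_
        have heq : C * ((C+2)*r)^t = (C*C*(C+2)^t) * (C⁻¹ * r^t) := by
          rw [Real.mul_rpow (by positivity) hr.le]
          field_simp
        rw [heq, ENNReal.ofReal_mul (by positivity), hc]
        exact mul_le_mul_left (ENNReal.ofReal_le_ofReal (le_max_left _ _)) _
      · have hD0 : 0 < D := hr.trans hcase
        have hone : (1:ℝ) ≤ (C*((C+2)/D)^t) * (C⁻¹ * r^t) := by
          have heq : (C*((C+2)/D)^t) * (C⁻¹ * r^t) = (((C+2)/D)*r)^t := by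
            rw [Real.mul_rpow (by positivity) hr.le]
            field_simp
          rw [heq]
          refine Real.one_le_rpow ?_ ht.le
          rw [div_mul_eq_mul_div, le_div_iff₀ hD0, one_mul]
          linarith [not_lt.mp h2]
        calc μ (Metric.closedBall a ((C+2)*r)) ≤ 1 := prob_le_one
          _ ≤ ENNReal.ofReal ((C*((C+2)/D)^t) * (C⁻¹ * r^t)) := ENNReal.one_le_ofReal.mpr hone
          _ = ENNReal.ofReal (C*((C+2)/D)^t) * c := by
              rw [ENNReal.ofReal_mul (by positivity), hc]
          _ ≤ ENNReal.ofReal KK * c :=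
              mul_le_mul_left (ENNReal.ofReal_le_ofReal (le_max_right _ _)) _
    have hfinal : (S.card : ℝ≥0∞) ≤ ENNReal.ofReal KK := by
      have := (hlow.trans hup).trans hbig
      exact (ENNReal.mul_le_mul_iff_left hc0 ENNReal.ofReal_ne_top).mp this
    have : (S.card : ℝ≥0∞) ≤ (⌈KK⌉₊ : ℝ≥0∞) := by
      refine hfinal.trans ?_
      rw [← ENNReal.ofReal_natCast]
      exact ENNReal.ofReal_le_ofReal (Nat.le_ceil KK)
    exact le_trans (Nat.cast_le.mp this) (le_max_right _ _)

/-- Cylinders at level `k` have diameter at most `2^{-(k+1)}`. -/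
private lemma tree_cyl_diam {X : Type*} [MetricSpace X] {B : Type*} [EMetricSpace B]
    (𝒬 : ℕ → Set (Set X))
    (hdisj : ∀ n, (𝒬 n).Pairwise Disjoint)
    (hne : ∀ n, ∀ Q ∈ 𝒬 n, Q.Nonempty)
    (path : B → ℕ → Set X)
    (hpathmem : ∀ v n, path v n ∈ 𝒬 n)
    (hpathnested : ∀ (v : B) (n : ℕ), path v (n + 1) ⊆ path v n)
    (hinj : Function.Injective path)
    (hdist : ∀ v u : B, v ≠ u →
      edist v u = (1 / 2 : ℝ≥0∞) ^ sInf {i : ℕ | path v i ≠ path u i})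
    (k : ℕ) (Q : Set X) :
    EMetric.diam {v : B | path v k = Q} ≤ (1/2 : ℝ≥0∞)^(k+1) := by
  have hanti : ∀ w : B, Antitone (path w) :=
    fun w => antitone_nat_of_succ_le (fun n => hpathnested w n)
  refine EMetric.diam_le (fun v hv u hu => ?_)
  rcases eq_or_ne v u with rfl | hvu
  · simp
  rw [hdist v u hvu]
  have hsne : {i : ℕ | path v i ≠ path u i}.Nonempty := by
    by_contra h
    rw [Set.not_nonempty_iff_eq_empty, Set.eq_empty_iff_forall_notMem] at h
    exact hvu (hinj (funext (fun i => not_not.mp (h i))))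
  have hagree : ∀ i ≤ k, path v i = path u i := by
    intro i hi
    by_contra hne2
    obtain ⟨x, hx⟩ := hne k (path v k) (hpathmem v k)
    have hxv : x ∈ path v i := hanti v hi hx
    have hxu : x ∈ path u i := by
      refine hanti u hi ?_
      rw [Set.mem_setOf_eq] at hv hu
      rw [hu, ← hv]; exact hx
    exact Set.disjoint_left.mp (hdisj i (hpathmem v i) (hpathmem u i) hne2) hxv hxu
  have hk1 : k + 1 ≤ sInf {i : ℕ | path v i ≠ path u i} := by
    by_contra h
    push_neg at h
    have hmem := Nat.sInf_mem hsne
    exact hmem (hagree _ (by omega))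
  exact pow_le_pow_of_le_one zero_le (by norm_num) hk1

/-- Lifting a small set of `X` to at most `M` cylinders in `B`. -/
private lemma tree_lift {X : Type*} [MetricSpace X] {B : Type*} [EMetricSpace B]
    (𝒬 : ℕ → Set (Set X)) (hfin : ∀ n, (𝒬 n).Finite)
    (hdisj : ∀ n, (𝒬 n).Pairwise Disjoint)
    (hne : ∀ n, ∀ Q ∈ 𝒬 n, Q.Nonempty)
    (path : B → ℕ → Set X)
    (hpathmem : ∀ v n, path v n ∈ 𝒬 n)
    (hpathnested : ∀ (v : B) (n : ℕ), path v (n + 1) ⊆ path v n)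
    (hinj : Function.Injective path)
    (hdist : ∀ v u : B, v ≠ u →
      edist v u = (1 / 2 : ℝ≥0∞) ^ sInf {i : ℕ | path v i ≠ path u i})
    (proj : B → X) (hproj : ∀ (v : B) (n : ℕ), proj v ∈ closure (path v n))
    (M : ℕ)
    (hM : ∀ (k : ℕ) (a : X),
      (((hfin k).toFinset.filter
        (fun Q => (closure Q ∩ closedBall a (((2:ℝ)^k)⁻¹)).Nonempty)).card) ≤ M)
    (k : ℕ) (U : Set X) (hU : EMetric.diam U ≤ (1/2 : ℝ≥0∞)^k) :
    ∃ g : Fin M → Set B, (proj ⁻¹' U ⊆ ⋃ i, g i) ∧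
      ∀ i, EMetric.diam (g i) ≤ (1/2 : ℝ≥0∞)^k := by
  rcases U.eq_empty_or_nonempty with rfl | ⟨a, ha⟩
  · exact ⟨fun _ => ∅, by simp, by simp [EMetric.diam]⟩
  set S := (hfin k).toFinset.filter
      (fun Q => (closure Q ∩ closedBall a (((2:ℝ)^k)⁻¹)).Nonempty) with hSdef
  set L := S.toList with hL
  have hlen : L.length ≤ M := by
    rw [hL, Finset.length_toList]; exact hM k a
  refine ⟨fun i => if h : (i : ℕ) < L.length then {v | path v k = L.get ⟨i, h⟩} else ∅,
    ?_, ?_⟩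
  · intro v hv
    have hvU : proj v ∈ U := hv
    have hmemS : path v k ∈ S := by
      rw [hSdef, Finset.mem_filter, Set.Finite.mem_toFinset]
      refine ⟨hpathmem v k, proj v, hproj v k, ?_⟩
      have hedist : edist (proj v) a ≤ ENNReal.ofReal (((2:ℝ)^k)⁻¹) := by
        rw [tree_half_pow]
        exact le_trans (EMetric.edist_le_diam_of_mem hvU ha) hU
      rw [edist_dist] at hedist
      exact Metric.mem_closedBall.mpr
        ((ENNReal.ofReal_le_ofReal_iff (by positivity)).mp hedist)
    have hmemL : path v k ∈ L := by rw [hL]; exact Finset.mem_toList.mpr hmemS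
    obtain ⟨⟨i, hi⟩, hget⟩ := List.mem_iff_get.mp hmemL
    refine Set.mem_iUnion.mpr ⟨⟨i, lt_of_lt_of_le hi hlen⟩, ?_⟩
    simp only [dif_pos hi]
    exact hget.symm
  · intro i
    by_cases h : (i : ℕ) < L.length
    · simp only [dif_pos h]
      refine le_trans (tree_cyl_diam 𝒬 hdisj hne path hpathmem hpathnested hinj hdist k _) ?_
      exact pow_le_pow_of_le_one zero_le (by norm_num) (Nat.le_succ k)
    · simp only [dif_neg h, EMetric.diam, EMetric.diam_empty, zero_le]



private lemma tree_liminf {X : Type*} [MetricSpace X] {B : Type*} [EMetricSpace B]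
    [MeasurableSpace B] [BorelSpace B]
    (proj : B → X) (E : Set X) (M : ℕ) (d : ℝ)
    (T : ℕ → ℕ → Set X) (hTcov : ∀ j, E ⊆ ⋃ n, T j n)
    (kk : ℕ → ℕ → ℕ) (hk2 : ∀ j n, j ≤ kk j n)
    (g : ℕ → ℕ → Fin M → Set B)
    (hgcov : ∀ j n, proj ⁻¹' (T j n) ⊆ ⋃ i, g j n i)
    (hgdiam : ∀ j n i, EMetric.diam (g j n i) ≤ (1/2:ℝ≥0∞)^(kk j n)) :
    μH[d] (proj ⁻¹' E) ≤ Filter.liminf (fun j => ∑' p : ℕ × Fin M,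
      EMetric.diam (g j p.1 p.2) ^ d) Filter.atTop := by
  have h1 : Filter.Tendsto (fun j : ℕ => (1/2:ℝ≥0∞)^j) Filter.atTop (nhds 0) :=
    ENNReal.tendsto_pow_atTop_nhds_zero_of_lt_one (by norm_num)
  have h2 : ∀ᶠ j in Filter.atTop, ∀ p : ℕ × Fin M,
      EMetric.diam (g j p.1 p.2) ≤ (1/2:ℝ≥0∞)^j := by
    refine Filter.Eventually.of_forall (fun j p => ?_)
    exact le_trans (hgdiam j p.1 p.2)
      (pow_le_pow_of_le_one zero_le (by norm_num) (hk2 j p.1))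
  have h3 : ∀ᶠ j in Filter.atTop, proj ⁻¹' E ⊆ ⋃ p : ℕ × Fin M, g j p.1 p.2 := by
    refine Filter.Eventually.of_forall (fun j v hv => ?_)
    have h5 : proj v ∈ ⋃ n, T j n := hTcov j hv
    obtain ⟨n, hn⟩ := Set.mem_iUnion.mp h5
    have h6 : v ∈ ⋃ i, g j n i := hgcov j n hn
    obtain ⟨i, hi⟩ := Set.mem_iUnion.mp h6
    exact Set.mem_iUnion.mpr ⟨(n, i), hi⟩
  exact Measure.hausdorffMeasure_le_liminf_tsum (ι := fun _ : ℕ => ℕ × Fin M) d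
    (proj ⁻¹' E) (fun j => (1/2:ℝ≥0∞)^j) h1 (fun j p => g j p.1 p.2) h2 h3

private lemma tree_bound {X : Type*} [MetricSpace X] {B : Type*} [EMetricSpace B]
    (d : ℝ) (hd0 : 0 < d) (j : ℕ) (M : ℕ) (T : ℕ → Set X) (kk : ℕ → ℕ)
    (g : ℕ → Fin M → Set B)
    (hk4 : ∀ n, (1/2:ℝ≥0∞)^(kk n) ≤ (1/2:ℝ≥0∞)^(j+n) + 2 * EMetric.diam (T n))
    (hgdiam : ∀ n i, EMetric.diam (g n i) ≤ (1/2:ℝ≥0∞)^(kk n))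
    (hTsum : (∑' n, EMetric.diam (T n) ^ d) ≤ (1/2:ℝ≥0∞)^j) :
    (∑' p : ℕ × Fin M, EMetric.diam (g p.1 p.2) ^ d) ≤
      (M : ℝ≥0∞) * 4^d * (((1/2:ℝ≥0∞)^d)^j * (1-(1/2:ℝ≥0∞)^d)⁻¹ + (1/2:ℝ≥0∞)^j) := by
  set y : ℝ≥0∞ := (1/2:ℝ≥0∞) ^ d with hy
  have hyp : ∀ m : ℕ, ((1/2:ℝ≥0∞)^m) ^ d = y ^ m := by
    intro m
    rw [hy, ← ENNReal.rpow_natCast ((1/2:ℝ≥0∞)^d) m, ← ENNReal.rpow_mul,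
      mul_comm, ENNReal.rpow_mul, ENNReal.rpow_natCast]
  have hmaxpow : ∀ a b : ℝ≥0∞, (max a b)^d ≤ a^d + b^d := by
    intro a b
    rcases le_total a b with h | h
    · rw [max_eq_right h]; exact le_add_self
    · rw [max_eq_left h]; exact le_self_add
  rw [ENNReal.tsum_prod']
  have hinner : ∀ n, (∑' i : Fin M, EMetric.diam (g n i) ^ d) ≤
      (M : ℝ≥0∞) * 4^d * (y^(j+n) + EMetric.diam (T n) ^ d) := by
    intro n
    have hterm : ∀ i : Fin M, EMetric.diam (g n i) ^ d ≤
        4^d * (y^(j+n) + EMetric.diam (T n) ^ d) := by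
      intro i
      have hstep : (1/2:ℝ≥0∞)^(kk n) ≤
          4 * max ((1/2:ℝ≥0∞)^(j+n)) (EMetric.diam (T n)) := by
        refine le_trans (hk4 n) ?_
        calc (1/2:ℝ≥0∞)^(j+n) + 2 * EMetric.diam (T n)
            ≤ max ((1/2:ℝ≥0∞)^(j+n)) (EMetric.diam (T n)) +
              2 * max ((1/2:ℝ≥0∞)^(j+n)) (EMetric.diam (T n)) :=
              add_le_add (le_max_left _ _) (mul_le_mul_right (le_max_right _ _) 2)
          _ = 3 * max ((1/2:ℝ≥0∞)^(j+n)) (EMetric.diam (T n)) := by ring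
          _ ≤ 4 * max ((1/2:ℝ≥0∞)^(j+n)) (EMetric.diam (T n)) :=
              mul_le_mul_left (by norm_num) _
      calc EMetric.diam (g n i) ^ d
          ≤ ((1/2:ℝ≥0∞)^(kk n)) ^ d :=
            ENNReal.rpow_le_rpow (hgdiam n i) hd0.le
        _ ≤ (4 * max ((1/2:ℝ≥0∞)^(j+n)) (EMetric.diam (T n))) ^ d :=
            ENNReal.rpow_le_rpow hstep hd0.le
        _ = 4^d * (max ((1/2:ℝ≥0∞)^(j+n)) (EMetric.diam (T n))) ^ d :=
            ENNReal.mul_rpow_of_nonneg _ _ hd0.le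
        _ ≤ 4^d * (((1/2:ℝ≥0∞)^(j+n))^d + EMetric.diam (T n) ^ d) :=
            mul_le_mul_right (hmaxpow _ _) _
        _ = 4^d * (y^(j+n) + EMetric.diam (T n) ^ d) := by rw [hyp]
    calc (∑' i : Fin M, EMetric.diam (g n i) ^ d)
        ≤ ∑' _ : Fin M, 4^d * (y^(j+n) + EMetric.diam (T n) ^ d) :=
          ENNReal.tsum_le_tsum hterm
      _ = (M : ℝ≥0∞) * (4^d * (y^(j+n) + EMetric.diam (T n) ^ d)) := by
          rw [tsum_fintype]
          simp [Finset.sum_const, Finset.card_univ, nsmul_eq_mul]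
      _ = (M : ℝ≥0∞) * 4^d * (y^(j+n) + EMetric.diam (T n) ^ d) := by
          rw [mul_assoc]
  calc (∑' n, ∑' i : Fin M, EMetric.diam (g (n, i).1 (n, i).2) ^ d)
      ≤ ∑' n, (M : ℝ≥0∞) * 4^d * (y^(j+n) + EMetric.diam (T n) ^ d) :=
        ENNReal.tsum_le_tsum hinner
    _ = (M : ℝ≥0∞) * 4^d * ((∑' n, y^(j+n)) + ∑' n, EMetric.diam (T n) ^ d) := by
        rw [ENNReal.tsum_mul_left, ENNReal.tsum_add]
    _ ≤ (M : ℝ≥0∞) * 4^d * (y^j * (1-y)⁻¹ + (1/2:ℝ≥0∞)^j) := by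
        refine mul_le_mul_right (add_le_add ?_ hTsum) _
        have hgeo : (∑' n, y^(j+n)) = y^j * ∑' n : ℕ, y^n := by
          rw [← ENNReal.tsum_mul_left]
          congr 1; funext n; rw [pow_add]
        rw [hgeo, ENNReal.tsum_geometric]

private lemma tree_tendsto (M : ℕ) (d : ℝ) (hd0 : 0 < d) :
    Filter.Tendsto (fun j => (M : ℝ≥0∞) * 4^d *
      (((1/2:ℝ≥0∞)^d)^j * (1-(1/2:ℝ≥0∞)^d)⁻¹ + (1/2:ℝ≥0∞)^j))
      Filter.atTop (nhds 0) := by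
  set y : ℝ≥0∞ := (1/2:ℝ≥0∞) ^ d with hy
  have hy1 : y < 1 := ENNReal.rpow_lt_one (by norm_num) hd0
  have hynt : (1-y)⁻¹ ≠ ∞ := ENNReal.inv_ne_top.mpr (tsub_pos_of_lt hy1).ne'
  have hcne : ((M : ℝ≥0∞) * 4^d) ≠ ∞ :=
    ENNReal.mul_ne_top (ENNReal.natCast_ne_top M)
      (ENNReal.rpow_ne_top_of_nonneg hd0.le (by norm_num))
  have h1 : Filter.Tendsto (fun j : ℕ => y^j * (1-y)⁻¹) Filter.atTop (nhds 0) := by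
    have := ENNReal.Tendsto.mul_const
      (ENNReal.tendsto_pow_atTop_nhds_zero_of_lt_one hy1) (Or.inr hynt)
    simpa using this
  have h2 : Filter.Tendsto (fun j : ℕ => (1/2:ℝ≥0∞)^j) Filter.atTop (nhds 0) :=
    ENNReal.tendsto_pow_atTop_nhds_zero_of_lt_one (by norm_num)
  have h3 : Filter.Tendsto (fun j : ℕ => y^j * (1-y)⁻¹ + (1/2:ℝ≥0∞)^j)
      Filter.atTop (nhds 0) := by
    simpa using h1.add h2
  have := ENNReal.Tendsto.const_mul (a := (M : ℝ≥0∞) * 4^d) h3 (Or.inr hcne)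
  simpa using this

private lemma tree_hard {X : Type*} [MetricSpace X] [MeasurableSpace X] [BorelSpace X]
    {B : Type*} [EMetricSpace B] [MeasurableSpace B] [BorelSpace B]
    (𝒬 : ℕ → Set (Set X)) (hfin : ∀ n, (𝒬 n).Finite)
    (hdisj : ∀ n, (𝒬 n).Pairwise Disjoint)
    (hne : ∀ n, ∀ Q ∈ 𝒬 n, Q.Nonempty)
    (path : B → ℕ → Set X)
    (hpathmem : ∀ v n, path v n ∈ 𝒬 n)
    (hpathnested : ∀ (v : B) (n : ℕ), path v (n + 1) ⊆ path v n)
    (hinj : Function.Injective path)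
    (hdist : ∀ v u : B, v ≠ u →
      edist v u = (1 / 2 : ℝ≥0∞) ^ sInf {i : ℕ | path v i ≠ path u i})
    (proj : B → X) (hproj : ∀ (v : B) (n : ℕ), proj v ∈ closure (path v n))
    (M : ℕ)
    (hM : ∀ (k : ℕ) (a : X),
      (((hfin k).toFinset.filter
        (fun Q => (closure Q ∩ closedBall a (((2:ℝ)^k)⁻¹)).Nonempty)).card) ≤ M)
    (E : Set X) (d : NNReal) (hd0 : (0:ℝ) < (d:ℝ)) (hE0 : μH[(d:ℝ)] E = 0) :
    μH[(d:ℝ)] (proj ⁻¹' E) = 0 := by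
  -- covers of E at every scale
  have hcov : ∀ j : ℕ, ∃ T : ℕ → Set X, (E ⊆ ⋃ n, T n) ∧
      (∀ n, EMetric.diam (T n) ≤ (1/2:ℝ≥0∞)^j) ∧
      (∑' n, EMetric.diam (T n) ^ (d:ℝ)) ≤ (1/2:ℝ≥0∞)^j := by
    intro j
    have hpos : (0:ℝ≥0∞) < (1/2:ℝ≥0∞)^j := ENNReal.pow_pos (by norm_num) j
    have h1 : (⨅ (T : ℕ → Set X) (_ : E ⊆ ⋃ n, T n)
        (_ : ∀ n, EMetric.diam (T n) ≤ (1/2:ℝ≥0∞)^j),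
        ∑' n, ⨆ _ : (T n).Nonempty, EMetric.diam (T n) ^ (d:ℝ)) = 0 := by
      refine le_antisymm ?_ zero_le
      rw [← hE0, Measure.hausdorffMeasure_apply]
      exact le_iSup₂ (α := ℝ≥0∞) ((1/2:ℝ≥0∞)^j) hpos
    have h2 : (⨅ (T : ℕ → Set X) (_ : E ⊆ ⋃ n, T n)
        (_ : ∀ n, EMetric.diam (T n) ≤ (1/2:ℝ≥0∞)^j),
        ∑' n, ⨆ _ : (T n).Nonempty, EMetric.diam (T n) ^ (d:ℝ)) < (1/2:ℝ≥0∞)^j := by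
      rw [h1]; exact hpos
    simp only [iInf_lt_iff] at h2
    obtain ⟨T, hT1, hT2, hT3⟩ := h2
    refine ⟨T, hT1, hT2, le_trans ?_ hT3.le⟩
    refine ENNReal.tsum_le_tsum (fun n => ?_)
    rcases (T n).eq_empty_or_nonempty with h | h
    · rw [h]
      simp [EMetric.diam, EMetric.diam_empty, ENNReal.zero_rpow_of_pos hd0]
    · rw [iSup_pos h]
  choose T hTcov hTdiam hTsum using hcov
  -- scales
  have h12 : (1/2:ℝ≥0∞) * 2 = 1 := by
    rw [one_div, ENNReal.inv_mul_cancel] <;> norm_num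
  have hscale : ∀ j n : ℕ, ∃ k : ℕ, j ≤ k ∧ EMetric.diam (T j n) ≤ (1/2:ℝ≥0∞)^k ∧
      (1/2:ℝ≥0∞)^k ≤ (1/2:ℝ≥0∞)^(j+n) + 2 * EMetric.diam (T j n) := by
    intro j n
    set P : ℕ → Prop := fun m => EMetric.diam (T j n) ≤ (1/2:ℝ≥0∞)^m with hP
    have hPj : P j := hTdiam j n
    refine ⟨Nat.findGreatest P (j+n), Nat.le_findGreatest (Nat.le_add_right j n) hPj,
      Nat.findGreatest_spec (Nat.le_add_right j n) hPj, ?_⟩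
    rcases eq_or_lt_of_le (Nat.findGreatest_le (j+n) : Nat.findGreatest P (j+n) ≤ j+n)
      with h | h
    · rw [h]; exact le_add_right le_rfl
    · have hng : ¬ P (Nat.findGreatest P (j+n) + 1) :=
        Nat.findGreatest_is_greatest (Nat.lt_succ_self _) h
      have hlt : (1/2:ℝ≥0∞)^(Nat.findGreatest P (j+n) + 1) < EMetric.diam (T j n) :=
        not_le.mp hng
      have heq2 : 2 * (1/2:ℝ≥0∞)^(Nat.findGreatest P (j+n) + 1)
          = (1/2:ℝ≥0∞)^(Nat.findGreatest P (j+n)) := by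
        rw [pow_succ]
        calc 2 * ((1/2:ℝ≥0∞)^(Nat.findGreatest P (j+n)) * (1/2))
            = (1/2:ℝ≥0∞)^(Nat.findGreatest P (j+n)) * ((1/2) * 2) := by ring
          _ = (1/2:ℝ≥0∞)^(Nat.findGreatest P (j+n)) := by rw [h12, mul_one]
      rw [← heq2]
      exact le_add_left (mul_le_mul_right hlt.le 2)
  choose kk hk2 hk1 hk4 using hscale
  -- lifted covers
  have hlift : ∀ j n, ∃ g : Fin M → Set B, (proj ⁻¹' (T j n) ⊆ ⋃ i, g i) ∧
      ∀ i, EMetric.diam (g i) ≤ (1/2:ℝ≥0∞)^(kk j n) :=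
    fun j n => tree_lift 𝒬 hfin hdisj hne path hpathmem hpathnested hinj hdist
      proj hproj M hM (kk j n) (T j n) (hk1 j n)
  choose g hgcov hgdiam using hlift
  have hmain : μH[(d:ℝ)] (proj ⁻¹' E) ≤
      Filter.liminf (fun j => ∑' p : ℕ × Fin M,
        EMetric.diam (g j p.1 p.2) ^ (d:ℝ)) Filter.atTop :=
    tree_liminf proj E M (d:ℝ) T hTcov kk hk2 g hgcov hgdiam
  have hbound : ∀ j, (∑' p : ℕ × Fin M, EMetric.diam (g j p.1 p.2) ^ (d:ℝ)) ≤
      (M : ℝ≥0∞) * 4^(d:ℝ) *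
        (((1/2:ℝ≥0∞)^(d:ℝ))^j * (1-(1/2:ℝ≥0∞)^(d:ℝ))⁻¹ + (1/2:ℝ≥0∞)^j) :=
    fun j => tree_bound (d:ℝ) hd0 j M (T j) (kk j) (g j) (hk4 j) (hgdiam j) (hTsum j)
  have hlim0 : Filter.liminf (fun j => ∑' p : ℕ × Fin M,
      EMetric.diam (g j p.1 p.2) ^ (d:ℝ)) Filter.atTop = 0 := by
    refine le_antisymm ?_ zero_le
    calc Filter.liminf (fun j => ∑' p : ℕ × Fin M,
          EMetric.diam (g j p.1 p.2) ^ (d:ℝ)) Filter.atTop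
        ≤ Filter.liminf (fun j => (M : ℝ≥0∞) * 4^(d:ℝ) *
          (((1/2:ℝ≥0∞)^(d:ℝ))^j * (1-(1/2:ℝ≥0∞)^(d:ℝ))⁻¹ + (1/2:ℝ≥0∞)^j))
          Filter.atTop :=
          Filter.liminf_le_liminf (Filter.Eventually.of_forall hbound)
      _ = 0 := (tree_tendsto M (d:ℝ) hd0).liminf_eq
  rw [hlim0] at hmain
  exact le_antisymm hmain zero_le

set_option maxHeartbeats 8000000 in
/-- Let `X` be a compact metric space carrying an Ahlfors `t`-regular Borel probability
measure `μ`, and let `(𝒬 n)` be nested finite Borel partitions of `X` with `𝒬 0 = {X}`,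
each piece `Q ∈ 𝒬 n` containing a closed ball of radius `2⁻ⁿ` and contained in the
concentric closed ball of radius `C·2⁻ⁿ`.  Let `B` be (the boundary `∂T` of) the associated
tree: an extended metric space whose points `v` correspond bijectively to nested chains
`path v : ℕ → Set X` of pieces, with `edist v u = 2^{-min{i : path v i ≠ path u i}}` for
`v ≠ u`.  Let `proj : B → X` be the canonical projection, `proj v ∈ ⋂ n closure (path v n)`.
Then for every `E ⊆ X`, the Hausdorff dimension of `E` in `X` equals the Hausdorff
dimension of `proj ⁻¹' E` in `(∂T, κ)`. -/
theorem dimH_eq_dimH_preimage_treeBoundary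
    {X : Type*} [MetricSpace X] [CompactSpace X] [MeasurableSpace X] [BorelSpace X]
    (μ : Measure X) [IsProbabilityMeasure μ] (t C : ℝ) (ht : 0 < t) (hC : 1 ≤ C)
    (hreg : ∀ (x : X) (ρ : ℝ), 0 < ρ → ρ < Metric.diam (Set.univ : Set X) →
      ENNReal.ofReal (C⁻¹ * ρ ^ t) ≤ μ (closedBall x ρ) ∧
      μ (closedBall x ρ) ≤ ENNReal.ofReal (C * ρ ^ t))
    (𝒬 : ℕ → Set (Set X))
    (hfin : ∀ n, (𝒬 n).Finite)
    (hmeas : ∀ n, ∀ Q ∈ 𝒬 n, MeasurableSet Q)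
    (hdisj : ∀ n, (𝒬 n).Pairwise Disjoint)
    (hcover : ∀ n, ⋃₀ 𝒬 n = Set.univ)
    (h0 : 𝒬 0 = {Set.univ})
    (hball : ∀ n, ∀ Q ∈ 𝒬 n, ∃ x : X,
      Metric.closedBall x (((2:ℝ) ^ n)⁻¹) ⊆ Q ∧ Q ⊆ Metric.closedBall x (C * ((2:ℝ) ^ n)⁻¹))
    (hnested : ∀ m n : ℕ, n ≤ m → ∀ Q ∈ 𝒬 m, ∀ R ∈ 𝒬 n, Q ⊆ R ∨ Disjoint Q R)
    (B : Type*) [EMetricSpace B]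
    (path : B → ℕ → Set X)
    (hpathmem : ∀ v n, path v n ∈ 𝒬 n)
    (hpathnested : ∀ (v : B) (n : ℕ), path v (n + 1) ⊆ path v n)
    (hinj : Function.Injective path)
    (hsurj : ∀ Q : ℕ → Set X, (∀ n, Q n ∈ 𝒬 n) → (∀ n, Q (n + 1) ⊆ Q n) → ∃ v, path v = Q)
    (hdist : ∀ v u : B, v ≠ u →
      edist v u = (1 / 2 : ℝ≥0∞) ^ sInf {i : ℕ | path v i ≠ path u i})
    (proj : B → X) (hproj : ∀ (v : B) (n : ℕ), proj v ∈ closure (path v n))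
    (E : Set X) :
    dimH E = dimH (proj ⁻¹' E) := by
  have hC0 : (0:ℝ) < C := lt_of_lt_of_le one_pos hC
  have hne : ∀ n, ∀ Q ∈ 𝒬 n, Q.Nonempty := by
    intro n Q hQ
    obtain ⟨x, hx1, -⟩ := hball n Q hQ
    exact ⟨x, hx1 (Metric.mem_closedBall_self (by positivity))⟩
  -- path at level 0 is univ
  have hpath0 : ∀ v : B, path v 0 = Set.univ := by
    intro v
    have := hpathmem v 0
    rw [h0, Set.mem_singleton_iff] at this
    exact this
  -- `proj` is surjective
  have hprojsurj : Function.Surjective proj := by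
    intro x
    have hex : ∀ n, ∃ Q, Q ∈ 𝒬 n ∧ x ∈ Q := by
      intro n
      have : x ∈ ⋃₀ 𝒬 n := by rw [hcover n]; trivial
      obtain ⟨Q, hQ, hxQ⟩ := this
      exact ⟨Q, hQ, hxQ⟩
    choose Q hQmem hxQ using hex
    have hQnested : ∀ n, Q (n+1) ⊆ Q n := by
      intro n
      rcases hnested (n+1) n (Nat.le_succ n) (Q (n+1)) (hQmem (n+1)) (Q n) (hQmem n) with
        h | h
      · exact h
      · exact absurd h (Set.not_disjoint_iff.mpr ⟨x, hxQ (n+1), hxQ n⟩)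
    obtain ⟨v, hv⟩ := hsurj Q hQmem hQnested
    refine ⟨v, ?_⟩
    have hdle : ∀ n : ℕ, dist (proj v) x ≤ 2 * C * ((2:ℝ)^n)⁻¹ := by
      intro n
      obtain ⟨y, -, hy2⟩ := hball n (Q n) (hQmem n)
      have h1 : proj v ∈ Metric.closedBall y (C * ((2:ℝ)^n)⁻¹) := by
        have := hproj v n
        rw [hv] at this
        exact closure_minimal hy2 Metric.isClosed_closedBall this
      have h2 : x ∈ Metric.closedBall y (C * ((2:ℝ)^n)⁻¹) := hy2 (hxQ n)
      have h3 := dist_triangle (proj v) y x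
      rw [Metric.mem_closedBall] at h1 h2
      have h4 : dist x y = dist y x := dist_comm x y
      nlinarith
    have htend : Filter.Tendsto (fun n : ℕ => 2 * C * ((2:ℝ)^n)⁻¹)
        Filter.atTop (nhds 0) := by
      have h1 : Filter.Tendsto (fun n : ℕ => ((2:ℝ)⁻¹)^n) Filter.atTop (nhds 0) :=
        tendsto_pow_atTop_nhds_zero_of_lt_one (by norm_num) (by norm_num)
      have := h1.const_mul (2*C)
      simpa [inv_pow] using this
    have : dist (proj v) x ≤ 0 := ge_of_tendsto' htend hdle
    exact dist_le_zero.mp this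
  -- `proj` is Lipschitz
  have hlip : LipschitzWith (4*C).toNNReal proj := by
    intro v u
    rcases eq_or_ne v u with rfl | hvu
    · simp
    rw [hdist v u hvu]
    have hsne : {i : ℕ | path v i ≠ path u i}.Nonempty := by
      by_contra h
      rw [Set.not_nonempty_iff_eq_empty, Set.eq_empty_iff_forall_notMem] at h
      exact hvu (hinj (funext (fun i => not_not.mp (h i))))
    set n := sInf {i : ℕ | path v i ≠ path u i} with hn
    have hn0 : n ≠ 0 := by
      intro h
      have := Nat.sInf_mem hsne
      rw [← hn, h] at this
      exact this ((hpath0 v).trans (hpath0 u).symm)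
    obtain ⟨m, hm⟩ : ∃ m, n = m + 1 := ⟨n - 1, by omega⟩
    have hmeq : path v m = path u m := by
      by_contra h
      have : n ≤ m := Nat.sInf_le h
      omega
    obtain ⟨y, -, hy2⟩ := hball m (path v m) (hpathmem v m)
    have h1 : proj v ∈ Metric.closedBall y (C * ((2:ℝ)^m)⁻¹) :=
      closure_minimal hy2 Metric.isClosed_closedBall (hproj v m)
    have h2 : proj u ∈ Metric.closedBall y (C * ((2:ℝ)^m)⁻¹) := by
      refine closure_minimal hy2 Metric.isClosed_closedBall ?_
      rw [hmeq]; exact hproj u m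
    have hdd : dist (proj v) (proj u) ≤ 4*C * ((2:ℝ)^n)⁻¹ := by
      have h3 := dist_triangle (proj v) y (proj u)
      rw [Metric.mem_closedBall] at h1 h2
      have h4 : dist (proj u) y = dist y (proj u) := dist_comm _ _
      have hpow : ((2:ℝ)^n)⁻¹ = ((2:ℝ)^m)⁻¹ / 2 := by
        rw [hm, pow_succ]; field_simp
      rw [hpow]
      have hp : (0:ℝ) < ((2:ℝ)^m)⁻¹ := by positivity
      nlinarith
    have hofk : (((4*C).toNNReal : ℝ≥0∞)) = ENNReal.ofReal (4*C) := rfl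
    calc edist (proj v) (proj u) = ENNReal.ofReal (dist (proj v) (proj u)) := edist_dist _ _
      _ ≤ ENNReal.ofReal (4*C * ((2:ℝ)^n)⁻¹) := ENNReal.ofReal_le_ofReal hdd
      _ = ENNReal.ofReal (4*C) * ENNReal.ofReal (((2:ℝ)^n)⁻¹) :=
          ENNReal.ofReal_mul (by positivity)
      _ = ((4*C).toNNReal : ℝ≥0∞) * (1/2 : ℝ≥0∞)^n := by rw [tree_half_pow, hofk]
  -- easy direction
  have hdir1 : dimH E ≤ dimH (proj ⁻¹' E) := by
    have himg := hlip.dimH_image_le (proj ⁻¹' E)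
    rwa [Set.image_preimage_eq E hprojsurj] at himg
  -- hard direction
  obtain ⟨M, hM0, hM⟩ := tree_mult μ t C ht hC hreg 𝒬 hfin hdisj hball
  have hdir2 : dimH (proj ⁻¹' E) ≤ dimH E := by
    by_contra hcon
    push_neg at hcon
    obtain ⟨d, hd1, hd2⟩ := ENNReal.lt_iff_exists_nnreal_btwn.mp hcon
    have hd0 : (0:ℝ) < (d:ℝ) := by
      rcases eq_or_lt_of_le (zero_le : 0 ≤ d) with h | h
      · exfalso; rw [← h] at hd1; simp at hd1
      · exact_mod_cast h
    have hE0 : μH[(d:ℝ)] E = 0 := hausdorffMeasure_of_dimH_lt hd1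
    borelize B
    have hpre0 : μH[(d:ℝ)] (proj ⁻¹' E) = 0 :=
      tree_hard 𝒬 hfin hdisj hne path hpathmem hpathnested hinj hdist proj hproj M hM E d
        hd0 hE0
    exact absurd (dimH_le_of_hausdorffMeasure_ne_top (by rw [hpre0]; exact ENNReal.zero_ne_top))
      (not_le.mpr hd2)
  exact le_antisymm hdir1 hdir2
end
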